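/- arXiv:2512.20433 — 4 statements merged into one kernel-verified Lean document; each statement's English description precedes it below -/
import Mathlib

section
/- Under Assumption A and for every γ ∈ (0, min{γ_g, 1/(L_f + L_h)}), the infimum over x ∈ ℝ^d of φ(x) = f(x) + g(x) + h(x) equals the infimum over x ∈ ℝ^d of the Davis–Yin envelope φ_γ^DY(x) (equality of infima in ℝ ∪ {±∞}). -/
open scoped RealInnerProductSpace

lemma descent_lemma {E : Type*} [NormedAddCommGroup E] [InnerProductSpace ℝ E]
    [CompleteSpace E] (f : E → ℝ) (L : ℝ) (hL : 0 ≤ L) (hfd : Differentiable ℝ f)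
    (hlip : ∀ a b : E, ‖gradient f a - gradient f b‖ ≤ L * ‖a - b‖) (x y : E) :
    f y ≤ f x + ⟪gradient f x, y - x⟫ + L / 2 * ‖y - x‖ ^ 2 := by
  set v := y - x with hv
  have hcont : Continuous (gradient f) := by
    refine (LipschitzWith.of_dist_le_mul (K := ⟨L, hL⟩) ?_).continuous
    intro a b
    rw [dist_eq_norm, dist_eq_norm]; exact hlip a b
  have hderiv : ∀ t : ℝ, HasDerivAt (fun t : ℝ => f (x + t • v))
      ⟪gradient f (x + t • v), v⟫ t := by
    intro t
    have hc : HasDerivAt (fun t : ℝ => x + t • v) v t := by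
      simpa using ((hasDerivAt_id t).smul_const v).const_add x
    have hf' := (hfd (x + t • v)).hasGradientAt.hasFDerivAt
    simpa [Function.comp_def] using hf'.comp_hasDerivAt t hc
  have hcont2 : Continuous (fun t : ℝ => ⟪gradient f (x + t • v), v⟫) := by
    exact (hcont.comp (by continuity)).inner continuous_const
  have hint : f y - f x = ∫ t in (0:ℝ)..1, ⟪gradient f (x + t • v), v⟫ := by
    have := intervalIntegral.integral_eq_sub_of_hasDerivAt
      (f := fun t : ℝ => f (x + t • v))
      (fun t _ => hderiv t) (hcont2.intervalIntegrable 0 1)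
    simp only [one_smul, zero_smul, add_zero] at this
    rw [this]
    simp [hv]
  have hbound : ∀ t ∈ Set.Icc (0:ℝ) 1,
      ⟪gradient f (x + t • v), v⟫ ≤ ⟪gradient f x, v⟫ + L * t * ‖v‖ ^ 2 := by
    intro t ht
    have h1 : ⟪gradient f (x + t • v) - gradient f x, v⟫ ≤ L * t * ‖v‖ ^ 2 := by
      calc ⟪gradient f (x + t • v) - gradient f x, v⟫
          ≤ ‖gradient f (x + t • v) - gradient f x‖ * ‖v‖ := real_inner_le_norm _ _
        _ ≤ (L * ‖(x + t • v) - x‖) * ‖v‖ := by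
            exact mul_le_mul_of_nonneg_right (hlip _ _) (norm_nonneg v)
        _ = L * t * ‖v‖ ^ 2 := by
            have : ‖(x + t • v) - x‖ = t * ‖v‖ := by
              simp [norm_smul, abs_of_nonneg ht.1]
            rw [this]; ring
    have := inner_sub_left (𝕜 := ℝ) (gradient f (x + t • v)) (gradient f x) v
    linarith [h1, this.symm.le, this.le]
  have hintle : (∫ t in (0:ℝ)..1, ⟪gradient f (x + t • v), v⟫)
      ≤ ∫ t in (0:ℝ)..1, (⟪gradient f x, v⟫ + L * t * ‖v‖ ^ 2) := by
    apply intervalIntegral.integral_mono_on (by norm_num)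
      (hcont2.intervalIntegrable 0 1)
      (Continuous.intervalIntegrable (by continuity) 0 1)
    exact hbound
  have hcalc : (∫ t in (0:ℝ)..1, (⟪gradient f x, v⟫ + L * t * ‖v‖ ^ 2))
      = ⟪gradient f x, v⟫ + L / 2 * ‖v‖ ^ 2 := by
    rw [intervalIntegral.integral_add (intervalIntegrable_const)
      (Continuous.intervalIntegrable (by continuity) 0 1)]
    simp only [intervalIntegral.integral_const, smul_eq_mul]
    have : (∫ t in (0:ℝ)..1, L * t * ‖v‖ ^ 2) = L / 2 * ‖v‖ ^ 2 := by
      have : (fun t : ℝ => L * t * ‖v‖ ^ 2) = fun t : ℝ => (L * ‖v‖ ^ 2) * t := by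
        funext t; ring
      rw [this, intervalIntegral.integral_const_mul, integral_id]
      ring
    rw [this]; ring
  linarith [hint, hintle, hcalc]

/-- The Davis–Yin envelope `φ_γ^DY`. -/
noncomputable def dyEnv {E : Type*} [NormedAddCommGroup E] [InnerProductSpace ℝ E]
    [CompleteSpace E] (f h : E → ℝ) (g : E → EReal) (γ : ℝ) (x : E) : EReal :=
  ⨅ y : E, (((f x + ⟪gradient f x, y - x⟫ + h x + ⟪gradient h x, y - x⟫
      + 1 / (2 * γ) * ‖y - x‖ ^ 2 : ℝ) : EReal) + g y)

theorem dyEnv_inf_eq_inf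
    {E : Type*} [NormedAddCommGroup E] [InnerProductSpace ℝ E] [FiniteDimensional ℝ E]
    (f h : E → ℝ) (g : E → EReal) (Lf Lh γg : ℝ)
    (hLf : 0 ≤ Lf) (hLh : 0 ≤ Lh)
    (hfd : Differentiable ℝ f)
    (hflip : ∀ x y : E, ‖gradient f x - gradient f y‖ ≤ Lf * ‖x - y‖)
    (hhd : Differentiable ℝ h)
    (hhlip : ∀ x y : E, ‖gradient h x - gradient h y‖ ≤ Lh * ‖x - y‖)
    (hγg : 0 < γg)
    (hgtop : ∃ x, g x ≠ ⊤) (hgbot : ∀ x, g x ≠ ⊥)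
    (hglsc : LowerSemicontinuous g)
    (hpb : ∀ γ : ℝ, 0 < γ → γ < γg → ∀ w : E,
      ⊥ < ⨅ y : E, (g y + ((1 / (2 * γ) * ‖y - w‖ ^ 2 : ℝ) : EReal)))
    (hattain : ∃ xs : E, ∀ x : E,
      (f xs : EReal) + g xs + (h xs : EReal) ≤ (f x : EReal) + g x + (h x : EReal))
    (γ : ℝ) (hγ0 : 0 < γ) (hγ1 : γ < γg) (hγ2 : γ * (Lf + Lh) < 1) :
    (⨅ x : E, ((f x : EReal) + g x + (h x : EReal))) = ⨅ x : E, dyEnv f h g γ x := by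
  apply le_antisymm
  · -- inf φ ≤ inf dyEnv
    refine le_iInf fun x => ?_
    rw [dyEnv]
    refine le_iInf fun y => ?_
    refine iInf_le_of_le y ?_
    have hQ : f y + h y ≤ f x + ⟪gradient f x, y - x⟫ + h x + ⟪gradient h x, y - x⟫
        + 1 / (2 * γ) * ‖y - x‖ ^ 2 := by
      have d1 := descent_lemma f Lf hLf hfd hflip x y
      have d2 := descent_lemma h Lh hLh hhd hhlip x y
      have key : (Lf + Lh) / 2 * ‖y - x‖ ^ 2 ≤ 1 / (2 * γ) * ‖y - x‖ ^ 2 := by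
        apply mul_le_mul_of_nonneg_right _ (sq_nonneg _)
        rw [div_le_div_iff₀ two_pos (by positivity)]
        nlinarith
      linarith
    calc (f y : EReal) + g y + (h y : EReal) = ((f y + h y : ℝ) : EReal) + g y := by
          rw [EReal.coe_add]; abel
      _ ≤ _ := add_le_add (EReal.coe_le_coe_iff.mpr hQ) le_rfl
  · -- inf dyEnv ≤ inf φ
    refine le_iInf fun x => iInf_le_of_le x ?_
    rw [dyEnv]
    refine iInf_le_of_le x ?_
    have : ((f x + ⟪gradient f x, x - x⟫ + h x + ⟪gradient h x, x - x⟫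
        + 1 / (2 * γ) * ‖x - x‖ ^ 2 : ℝ) : EReal) + g x
        = (f x : EReal) + g x + (h x : EReal) := by
      simp only [sub_self, inner_zero_right, norm_zero, add_zero, mul_zero]
      norm_num
      abel
    rw [this]
end

section
/- Under Assumption A and for every γ ∈ (0, min{γ_g, 1/(L_f + L_h)}), the infimum defining the Davis–Yin envelope φ_γ^DY(x) is a real number for every x ∈ ℝ^d, and the real-valued function x ↦ φ_γ^DY(x) is locally Lipschitz continuous: every point of ℝ^d has a neighborhood on which φ_γ^DY is Lipschitz continuous. -/
open scoped RealInnerProductSpace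

noncomputable def menv {E : Type*} [NormedAddCommGroup E] (g : E → EReal) (γ : ℝ) (w : E) : EReal :=
  ⨅ y : E, (g y + ((1 / (2 * γ) * ‖y - w‖ ^ 2 : ℝ) : EReal))


lemma menv_ne_top {E : Type*} [NormedAddCommGroup E] (g : E → EReal) (γ : ℝ)
    (y₀ : E) (hy₀ : g y₀ ≠ ⊤) (w : E) : menv g γ w ≠ ⊤ := by
  have h1 : menv g γ w ≤ g y₀ + ((1 / (2 * γ) * ‖y₀ - w‖ ^ 2 : ℝ) : EReal) := iInf_le _ y₀
  exact ne_top_of_le_ne_top (EReal.add_lt_top hy₀ (EReal.coe_ne_top _)).ne h1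



private lemma quad_bound (α γ U b R t : ℝ) (hα : 0 < α)
    (hR1 : max (U + 1 - b) 0 + 1 ≤ R) (hR0 : 0 < R) (hαR : 1 / γ + 1 ≤ α * R)
    (hq : α * t ^ 2 - t / γ < U + 1 - b) (ht : 0 ≤ t) : t ≤ R := by
  by_contra hcon
  push_neg at hcon
  have h5 : 1 / γ + 1 < α * t := lt_of_le_of_lt hαR (mul_lt_mul_of_pos_left hcon hα)
  have ht0' : (0:ℝ) < t := lt_of_lt_of_le hR0 hcon.le
  have h6 := mul_pos ht0' (show 0 < α * t - 1 / γ - 1 by linarith)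
  have h7 : U + 1 - b ≤ max (U + 1 - b) 0 := le_max_left _ _
  have h8 : α * t ^ 2 - t / γ = t * (α * t - 1 / γ - 1) + t := by ring
  linarith


lemma menv_lip {E : Type*} [NormedAddCommGroup E] (g : E → EReal) (γ γ' : ℝ)
    (hγ0 : 0 < γ) (hγγ' : γ < γ') (y₀ : E) (hy₀ : g y₀ ≠ ⊤) (hgbot : ∀ x, g x ≠ ⊥)
    (c : E)
    (hlb : ⊥ < ⨅ y : E, (g y + ((1 / (2 * γ') * ‖y - c‖ ^ 2 : ℝ) : EReal)))
    (hpbγ : ∀ w : E, ⊥ < menv g γ w) :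
    ∃ K : ℝ, 0 ≤ K ∧ ∀ w₁ ∈ Metric.ball c 1, ∀ w₂ ∈ Metric.ball c 1,
      (menv g γ w₁).toReal - (menv g γ w₂).toReal ≤ K * ‖w₁ - w₂‖ := by
  have hγ'0 : 0 < γ' := hγ0.trans hγγ'
  obtain ⟨I', hI'⟩ : ∃ I' : EReal, I' = ⨅ y : E, (g y + ((1 / (2 * γ') * ‖y - c‖ ^ 2 : ℝ) : EReal)) := ⟨_, rfl⟩
  rw [← hI'] at hlb
  have hI'top : I' ≠ ⊤ := by
    rw [hI']
    exact ne_top_of_le_ne_top (EReal.add_lt_top hy₀ (EReal.coe_ne_top _)).ne (iInf_le _ y₀)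
  obtain ⟨b, hbdef⟩ : ∃ b : ℝ, b = I'.toReal := ⟨_, rfl⟩
  have hbI : (b : EReal) = I' := by rw [hbdef]; exact EReal.coe_toReal hI'top hlb.ne'
  have hb : ∀ y : E, (b : EReal) ≤ g y + ((1 / (2 * γ') * ‖y - c‖ ^ 2 : ℝ) : EReal) := by
    intro y; rw [hbI, hI']; exact iInf_le _ y
  obtain ⟨g₀, hg₀def⟩ : ∃ g₀ : ℝ, g₀ = (g y₀).toReal := ⟨_, rfl⟩
  have hg₀ : (g₀ : EReal) = g y₀ := by rw [hg₀def]; exact EReal.coe_toReal hy₀ (hgbot y₀)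
  obtain ⟨U, hUdef⟩ : ∃ U : ℝ, U = g₀ + 1 / (2 * γ) * (‖y₀ - c‖ + 1) ^ 2 := ⟨_, rfl⟩
  have hγinv : (0:ℝ) < 1 / (2 * γ) := by positivity
  have hU : ∀ w ∈ Metric.ball c 1, (menv g γ w).toReal ≤ U := by
    intro w hw
    have hwc : ‖w - c‖ < 1 := by simpa [dist_eq_norm] using hw
    have htri : ‖y₀ - w‖ ≤ ‖y₀ - c‖ + ‖c - w‖ := norm_sub_le_norm_sub_add_norm_sub _ _ _
    have hcw : ‖c - w‖ < 1 := by rw [norm_sub_rev]; exact hwc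
    have hnorm : ‖y₀ - w‖ ≤ ‖y₀ - c‖ + 1 := by linarith
    have hsq : ‖y₀ - w‖ ^ 2 ≤ (‖y₀ - c‖ + 1) ^ 2 := by nlinarith [norm_nonneg (y₀ - w)]
    have h1 : menv g γ w ≤ ((U : ℝ) : EReal) := by
      calc menv g γ w ≤ g y₀ + ((1 / (2 * γ) * ‖y₀ - w‖ ^ 2 : ℝ) : EReal) := iInf_le _ y₀
        _ = (((g₀ + 1 / (2 * γ) * ‖y₀ - w‖ ^ 2 : ℝ)) : EReal) := by rw [← hg₀]; norm_cast
        _ ≤ ((U : ℝ) : EReal) := by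
            apply EReal.coe_le_coe_iff.mpr
            have := mul_le_mul_of_nonneg_left hsq hγinv.le
            rw [hUdef]; linarith
    have := EReal.toReal_le_toReal h1 (hpbγ w).ne' (EReal.coe_ne_top _)
    simpa using this
  obtain ⟨α, hαdef⟩ : ∃ α : ℝ, α = 1 / (2 * γ) - 1 / (2 * γ') := ⟨_, rfl⟩
  have hα : 0 < α := by
    have : 1 / (2 * γ') < 1 / (2 * γ) := by
      apply one_div_lt_one_div_of_lt <;> linarith
    rw [hαdef]; linarith
  obtain ⟨R, hRdef⟩ : ∃ R : ℝ, R = max (max (U + 1 - b) 0 + 1) ((1 / γ + 1) / α) := ⟨_, rfl⟩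
  have hR1 : max (U + 1 - b) 0 + 1 ≤ R := hRdef ▸ le_max_left _ _
  have hR0 : 0 < R :=
    lt_of_lt_of_le (by positivity) ((le_add_of_nonneg_left (le_max_right _ _)).trans hR1)
  have hαR : 1 / γ + 1 ≤ α * R := by
    have h : (1 / γ + 1) / α ≤ R := hRdef ▸ le_max_right _ _
    calc 1 / γ + 1 = α * ((1 / γ + 1) / α) := by field_simp
      _ ≤ α * R := mul_le_mul_of_nonneg_left h hα.le
  have hmin : ∀ w ∈ Metric.ball c 1, ∀ ε : ℝ, 0 < ε → ε ≤ 1 → ∃ y : E,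
      g y ≠ ⊤ ∧ (g y).toReal + 1 / (2 * γ) * ‖y - w‖ ^ 2 < (menv g γ w).toReal + ε ∧
      ‖y - c‖ ≤ R := by
    intro w hw ε hε hε1
    have hwtop : menv g γ w ≠ ⊤ := menv_ne_top g γ y₀ hy₀ w
    have hmw : ((menv g γ w).toReal : EReal) = menv g γ w := EReal.coe_toReal hwtop (hpbγ w).ne'
    have hlt : menv g γ w < (((menv g γ w).toReal + ε : ℝ) : EReal) := by
      rw [← hmw]; exact_mod_cast lt_add_of_pos_right _ hε
    obtain ⟨y, hy⟩ := iInf_lt_iff.mp hlt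
    have hgy : g y ≠ ⊤ := by
      intro hh
      rw [hh, EReal.top_add_coe] at hy
      exact not_top_lt hy
    have hgyc : ((g y).toReal : EReal) = g y := EReal.coe_toReal hgy (hgbot y)
    rw [← hgyc] at hy
    have hy' : (g y).toReal + 1 / (2 * γ) * ‖y - w‖ ^ 2 < (menv g γ w).toReal + ε := by
      exact_mod_cast hy
    refine ⟨y, hgy, hy', ?_⟩
    have hby : b ≤ (g y).toReal + 1 / (2 * γ') * ‖y - c‖ ^ 2 := by
      have := hb y; rw [← hgyc] at this; exact_mod_cast this
    have ht0 : (0:ℝ) ≤ ‖y - c‖ := norm_nonneg _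
    have hs0 : (0:ℝ) ≤ ‖y - w‖ := norm_nonneg _
    have hwc : ‖w - c‖ < 1 := by simpa [dist_eq_norm] using hw
    have htri : ‖y - c‖ ≤ ‖y - w‖ + ‖w - c‖ := norm_sub_le_norm_sub_add_norm_sub _ _ _
    have hts : ‖y - c‖ ≤ ‖y - w‖ + 1 := by linarith
    have hs2 : ‖y - c‖ ^ 2 - 2 * ‖y - c‖ ≤ ‖y - w‖ ^ 2 := by
      rcases le_or_gt ‖y - c‖ 1 with h | h
      · nlinarith
      · nlinarith
    have hUw : (menv g γ w).toReal ≤ U := hU w hw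
    have hq : α * ‖y - c‖ ^ 2 - ‖y - c‖ / γ < U + 1 - b := by
      have h2 : 1 / (2 * γ) * (‖y - c‖ ^ 2 - 2 * ‖y - c‖) ≤ 1 / (2 * γ) * ‖y - w‖ ^ 2 :=
        mul_le_mul_of_nonneg_left hs2 hγinv.le
      have h3 : 1 / (2 * γ) * (‖y - c‖ ^ 2 - 2 * ‖y - c‖) - 1 / (2 * γ') * ‖y - c‖ ^ 2
          = α * ‖y - c‖ ^ 2 - ‖y - c‖ / γ := by
        rw [hαdef]; field_simp; ring
      linarith
    exact quad_bound α γ U b R ‖y - c‖ hα hR1 hR0 hαR hq ht0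
  refine ⟨(R + 1) / γ, by positivity, ?_⟩
  intro w₁ hw₁ w₂ hw₂
  have hd0 : (0:ℝ) ≤ ‖w₁ - w₂‖ := norm_nonneg _
  have key : ∀ ε : ℝ, 0 < ε → ε ≤ 1 →
      (menv g γ w₁).toReal ≤ (menv g γ w₂).toReal + (R + 1) / γ * ‖w₁ - w₂‖ + ε := by
    intro ε hε hε1
    obtain ⟨y, hytop, hylt, hyR⟩ := hmin w₂ hw₂ ε hε hε1
    have hgyc : ((g y).toReal : EReal) = g y := EReal.coe_toReal hytop (hgbot y)
    have h1 : menv g γ w₁ ≤ (((g y).toReal + 1 / (2 * γ) * ‖y - w₁‖ ^ 2 : ℝ) : EReal) := by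
      calc menv g γ w₁ ≤ g y + ((1 / (2 * γ) * ‖y - w₁‖ ^ 2 : ℝ) : EReal) := iInf_le _ y
        _ = _ := by rw [← hgyc]; norm_cast
    have h1' : (menv g γ w₁).toReal ≤ (g y).toReal + 1 / (2 * γ) * ‖y - w₁‖ ^ 2 := by
      have := EReal.toReal_le_toReal h1 (hpbγ w₁).ne' (EReal.coe_ne_top _)
      simpa only [EReal.toReal_coe] using this
    have ha0 : (0:ℝ) ≤ ‖y - w₁‖ := norm_nonneg _
    have hb20 : (0:ℝ) ≤ ‖y - w₂‖ := norm_nonneg _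
    have hab : ‖y - w₁‖ ≤ ‖y - w₂‖ + ‖w₁ - w₂‖ := by
      have := norm_sub_le_norm_sub_add_norm_sub y w₂ w₁
      rw [norm_sub_rev w₂ w₁] at this; exact this
    have hw₁c : ‖c - w₁‖ < 1 := by rw [norm_sub_rev]; simpa [dist_eq_norm] using hw₁
    have hw₂c : ‖c - w₂‖ < 1 := by rw [norm_sub_rev]; simpa [dist_eq_norm] using hw₂
    have haR : ‖y - w₁‖ ≤ R + 1 := by
      have := norm_sub_le_norm_sub_add_norm_sub y c w₁; linarith
    have hb2R : ‖y - w₂‖ ≤ R + 1 := by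
      have := norm_sub_le_norm_sub_add_norm_sub y c w₂; linarith
    have hsq : ‖y - w₁‖ ^ 2 - ‖y - w₂‖ ^ 2 ≤ ‖w₁ - w₂‖ * (‖y - w₁‖ + ‖y - w₂‖) := by
      have hmul := mul_le_mul_of_nonneg_right (show ‖y - w₁‖ - ‖y - w₂‖ ≤ ‖w₁ - w₂‖ by linarith)
        (show (0:ℝ) ≤ ‖y - w₁‖ + ‖y - w₂‖ by linarith)
      have hident : ‖y - w₁‖ ^ 2 - ‖y - w₂‖ ^ 2
          = (‖y - w₁‖ - ‖y - w₂‖) * (‖y - w₁‖ + ‖y - w₂‖) := by ring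
      linarith
    have hsq2 : ‖y - w₁‖ ^ 2 - ‖y - w₂‖ ^ 2 ≤ 2 * (R + 1) * ‖w₁ - w₂‖ := by
      calc ‖y - w₁‖ ^ 2 - ‖y - w₂‖ ^ 2 ≤ ‖w₁ - w₂‖ * (‖y - w₁‖ + ‖y - w₂‖) := hsq
        _ ≤ ‖w₁ - w₂‖ * (2 * (R + 1)) := mul_le_mul_of_nonneg_left (by linarith) hd0
        _ = 2 * (R + 1) * ‖w₁ - w₂‖ := by ring
    have hfin : 1 / (2 * γ) * (‖y - w₁‖ ^ 2 - ‖y - w₂‖ ^ 2) ≤ (R + 1) / γ * ‖w₁ - w₂‖ := by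
      calc 1 / (2 * γ) * (‖y - w₁‖ ^ 2 - ‖y - w₂‖ ^ 2)
          ≤ 1 / (2 * γ) * (2 * (R + 1) * ‖w₁ - w₂‖) := mul_le_mul_of_nonneg_left hsq2 hγinv.le
        _ = (R + 1) / γ * ‖w₁ - w₂‖ := by field_simp
    have hid : 1 / (2 * γ) * ‖y - w₁‖ ^ 2
        = 1 / (2 * γ) * ‖y - w₂‖ ^ 2 + 1 / (2 * γ) * (‖y - w₁‖ ^ 2 - ‖y - w₂‖ ^ 2) := by ring
    linarith
  by_contra hcon
  push_neg at hcon
  have hε₀pos : 0 < (menv g γ w₁).toReal - ((menv g γ w₂).toReal + (R + 1) / γ * ‖w₁ - w₂‖) := by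
    linarith
  obtain ⟨ε₀, hε₀def⟩ : ∃ ε₀ : ℝ,
      ε₀ = (menv g γ w₁).toReal - ((menv g γ w₂).toReal + (R + 1) / γ * ‖w₁ - w₂‖) := ⟨_, rfl⟩
  have hε₀pos' : 0 < ε₀ := by rw [hε₀def]; linarith
  have hmle := min_le_left ε₀ 1
  have hmle1 := min_le_right ε₀ 1
  have hmpos : 0 < min ε₀ 1 := lt_min hε₀pos' one_pos
  have := key (min ε₀ 1 / 2) (by positivity) (by linarith)
  linarith [hε₀def.le, hε₀def.ge]

lemma ereal_rearrange (a b : ℝ) (z : EReal) :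
    ((a + b : ℝ) : EReal) + z = (a : EReal) + (z + (b : EReal)) := by
  induction z using EReal.rec with
  | bot => simp
  | coe r => norm_cast; ring
  | top => simp


lemma ereal_add_iInf {ι : Sort*} [Nonempty ι] (a : ℝ) (G : ι → EReal) :
    ⨅ y, ((a : EReal) + G y) = (a : EReal) + ⨅ y, G y := by
  refine le_antisymm ?_ (le_iInf fun y => add_le_add_right (iInf_le _ y) _)
  have h1 : ∀ y, ((-a : ℝ) : EReal) + ⨅ z, ((a : EReal) + G z) ≤ G y := by
    intro y
    have h := iInf_le (fun z => (a : EReal) + G z) y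
    calc ((-a : ℝ) : EReal) + ⨅ z, ((a : EReal) + G z) ≤ ((-a:ℝ):EReal) + ((a:EReal) + G y) :=
          add_le_add_right h _
      _ = G y := by
          induction (G y) using EReal.rec with
          | bot => simp
          | coe r => norm_cast; ring
          | top => simp [EReal.coe_add_top]
  have h2 : ((-a : ℝ) : EReal) + ⨅ z, ((a : EReal) + G z) ≤ ⨅ y, G y := le_iInf h1
  have h3 := add_le_add_right h2 ((a : ℝ) : EReal)
  calc ⨅ y, ((a:EReal) + G y) = (a:EReal) + (((-a:ℝ):EReal) + ⨅ z, ((a:EReal) + G z)) := by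
        induction (⨅ z, ((a:EReal) + G z)) using EReal.rec with
        | bot => simp
        | coe r => norm_cast; ring
        | top => simp [EReal.coe_add_top]
    _ ≤ (a:EReal) + ⨅ y, G y := h3


lemma dyEnv_eq_menv {E : Type*} [NormedAddCommGroup E] [InnerProductSpace ℝ E]
    [CompleteSpace E] (f h : E → ℝ) (g : E → EReal) (γ : ℝ) (hγ0 : 0 < γ) (x : E) :
    dyEnv f h g γ x
      = ((f x + h x - γ / 2 * ‖gradient f x + gradient h x‖ ^ 2 : ℝ) : EReal)
        + menv g γ (x - γ • (gradient f x + gradient h x)) := by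
  have hpt : ∀ y : E,
      (((f x + ⟪gradient f x, y - x⟫ + h x + ⟪gradient h x, y - x⟫
        + 1 / (2 * γ) * ‖y - x‖ ^ 2 : ℝ) : EReal) + g y)
      = ((f x + h x - γ / 2 * ‖gradient f x + gradient h x‖ ^ 2 : ℝ) : EReal)
        + (g y + ((1 / (2 * γ) * ‖y - (x - γ • (gradient f x + gradient h x))‖ ^ 2 : ℝ) : EReal)) := by
    intro y
    have hvec : y - (x - γ • (gradient f x + gradient h x))
        = (y - x) + γ • (gradient f x + gradient h x) := by abel
    have hnorm : ‖y - (x - γ • (gradient f x + gradient h x))‖ ^ 2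
        = ‖y - x‖ ^ 2 + 2 * (γ * (⟪gradient f x, y - x⟫ + ⟪gradient h x, y - x⟫))
          + γ ^ 2 * ‖gradient f x + gradient h x‖ ^ 2 := by
      rw [hvec, norm_add_sq_real, real_inner_smul_right, norm_smul]
      rw [real_inner_comm, inner_add_left]
      rw [mul_pow, Real.norm_eq_abs, sq_abs]
    have hreal : (f x + ⟪gradient f x, y - x⟫ + h x + ⟪gradient h x, y - x⟫
        + 1 / (2 * γ) * ‖y - x‖ ^ 2 : ℝ)
        = (f x + h x - γ / 2 * ‖gradient f x + gradient h x‖ ^ 2)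
          + 1 / (2 * γ) * ‖y - (x - γ • (gradient f x + gradient h x))‖ ^ 2 := by
      rw [hnorm]; field_simp; ring
    rw [hreal, ereal_rearrange]
  rw [dyEnv, iInf_congr hpt, ereal_add_iInf]
  rfl


set_option maxHeartbeats 1000000 in
theorem dyEnv_real_and_locallyLipschitz
    {E : Type*} [NormedAddCommGroup E] [InnerProductSpace ℝ E] [FiniteDimensional ℝ E]
    (f h : E → ℝ) (g : E → EReal) (Lf Lh γg : ℝ)
    (hLf : 0 ≤ Lf) (hLh : 0 ≤ Lh)
    (hfd : Differentiable ℝ f)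
    (hflip : ∀ x y : E, ‖gradient f x - gradient f y‖ ≤ Lf * ‖x - y‖)
    (hhd : Differentiable ℝ h)
    (hhlip : ∀ x y : E, ‖gradient h x - gradient h y‖ ≤ Lh * ‖x - y‖)
    (hγg : 0 < γg)
    (hgtop : ∃ x, g x ≠ ⊤) (hgbot : ∀ x, g x ≠ ⊥)
    (hglsc : LowerSemicontinuous g)
    (hpb : ∀ γ : ℝ, 0 < γ → γ < γg → ∀ w : E,
      ⊥ < ⨅ y : E, (g y + ((1 / (2 * γ) * ‖y - w‖ ^ 2 : ℝ) : EReal)))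
    (hattain : ∃ xs : E, ∀ x : E,
      (f xs : EReal) + g xs + (h xs : EReal) ≤ (f x : EReal) + g x + (h x : EReal))
    (γ : ℝ) (hγ0 : 0 < γ) (hγ1 : γ < γg) (hγ2 : γ * (Lf + Lh) < 1) :
    (∀ x : E, dyEnv f h g γ x ≠ ⊤ ∧ dyEnv f h g γ x ≠ ⊥) ∧
      (∀ x : E, ∃ U ∈ nhds x, ∃ K : ℝ, 0 ≤ K ∧ ∀ a ∈ U, ∀ b ∈ U,
        |(dyEnv f h g γ a).toReal - (dyEnv f h g γ b).toReal| ≤ K * ‖a - b‖) := by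
  obtain ⟨y₀, hy₀⟩ := hgtop
  have hpbγ : ∀ w : E, ⊥ < menv g γ w := fun w => hpb γ hγ0 hγ1 w
  have hFin : ∀ x : E, dyEnv f h g γ x ≠ ⊤ ∧ dyEnv f h g γ x ≠ ⊥ ∧
      (dyEnv f h g γ x).toReal
        = (f x + h x - γ / 2 * ‖gradient f x + gradient h x‖ ^ 2)
          + (menv g γ (x - γ • (gradient f x + gradient h x))).toReal := by
    intro x
    have heq := dyEnv_eq_menv f h g γ hγ0 x
    have hnt : menv g γ (x - γ • (gradient f x + gradient h x)) ≠ ⊤ :=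
      menv_ne_top g γ y₀ hy₀ _
    have hco : ((menv g γ (x - γ • (gradient f x + gradient h x))).toReal : EReal)
        = menv g γ (x - γ • (gradient f x + gradient h x)) :=
      EReal.coe_toReal hnt (hpbγ _).ne'
    have heq2 : dyEnv f h g γ x
        = (((f x + h x - γ / 2 * ‖gradient f x + gradient h x‖ ^ 2)
            + (menv g γ (x - γ • (gradient f x + gradient h x))).toReal : ℝ) : EReal) := by
      rw [heq, ← hco]; norm_cast
    exact ⟨by rw [heq2]; exact EReal.coe_ne_top _, by rw [heq2]; exact EReal.coe_ne_bot _,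
      by rw [heq2, EReal.toReal_coe]⟩
  refine ⟨fun x => ⟨(hFin x).1, (hFin x).2.1⟩, ?_⟩
  intro x0
  have hLv : (0:ℝ) ≤ Lf + Lh := add_nonneg hLf hLh
  have hLw0 : (0:ℝ) < 1 + γ * (Lf + Lh) := by nlinarith [mul_nonneg hγ0.le hLv]
  have hLw1 : (1:ℝ) ≤ 1 + γ * (Lf + Lh) := by nlinarith [mul_nonneg hγ0.le hLv]
  obtain ⟨δ, hδdef⟩ : ∃ δ : ℝ, δ = 1 / (2 * (1 + γ * (Lf + Lh))) := ⟨_, rfl⟩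
  have hδ0 : 0 < δ := by rw [hδdef]; positivity
  have hδ1 : δ ≤ 1 := by
    rw [hδdef, div_le_one (by linarith)]; linarith
  have hvlip : ∀ a b : E, ‖(gradient f a + gradient h a) - (gradient f b + gradient h b)‖
      ≤ (Lf + Lh) * ‖a - b‖ := by
    intro a b
    have h1 : (gradient f a + gradient h a) - (gradient f b + gradient h b)
        = (gradient f a - gradient f b) + (gradient h a - gradient h b) := by abel
    rw [h1]
    calc ‖(gradient f a - gradient f b) + (gradient h a - gradient h b)‖
        ≤ ‖gradient f a - gradient f b‖ + ‖gradient h a - gradient h b‖ := norm_add_le _ _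
      _ ≤ Lf * ‖a - b‖ + Lh * ‖a - b‖ := add_le_add (hflip a b) (hhlip a b)
      _ = (Lf + Lh) * ‖a - b‖ := by ring
  have hwlip : ∀ a b : E,
      ‖(a - γ • (gradient f a + gradient h a)) - (b - γ • (gradient f b + gradient h b))‖
      ≤ (1 + γ * (Lf + Lh)) * ‖a - b‖ := by
    intro a b
    have h1 : (a - γ • (gradient f a + gradient h a)) - (b - γ • (gradient f b + gradient h b))
        = (a - b) - γ • ((gradient f a + gradient h a) - (gradient f b + gradient h b)) := by
      rw [smul_sub]; abel
    rw [h1]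
    have h2 : ‖γ • ((gradient f a + gradient h a) - (gradient f b + gradient h b))‖
        = γ * ‖(gradient f a + gradient h a) - (gradient f b + gradient h b)‖ := by
      rw [norm_smul, Real.norm_eq_abs, abs_of_pos hγ0]
    calc ‖(a - b) - γ • ((gradient f a + gradient h a) - (gradient f b + gradient h b))‖
        ≤ ‖a - b‖ + ‖γ • ((gradient f a + gradient h a) - (gradient f b + gradient h b))‖ :=
          norm_sub_le _ _
      _ ≤ ‖a - b‖ + γ * ((Lf + Lh) * ‖a - b‖) := by
          rw [h2]
          exact add_le_add_right (mul_le_mul_of_nonneg_left (hvlip a b) hγ0.le) _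
      _ = (1 + γ * (Lf + Lh)) * ‖a - b‖ := by ring
  obtain ⟨KM, hKM0, hKM⟩ := menv_lip g γ ((γ + γg) / 2) hγ0 (by linarith) y₀ hy₀ hgbot
    (x0 - γ • (gradient f x0 + gradient h x0))
    (hpb ((γ + γg) / 2) (by linarith) (by linarith) _) hpbγ
  -- membership of the image ball
  have hwball : ∀ a ∈ Metric.ball x0 δ,
      (a - γ • (gradient f a + gradient h a))
        ∈ Metric.ball (x0 - γ • (gradient f x0 + gradient h x0)) 1 := by
    intro a ha
    have hax : ‖a - x0‖ < δ := by rw [← dist_eq_norm]; exact ha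
    rw [Metric.mem_ball, dist_eq_norm]
    calc ‖(a - γ • (gradient f a + gradient h a))
          - (x0 - γ • (gradient f x0 + gradient h x0))‖
        ≤ (1 + γ * (Lf + Lh)) * ‖a - x0‖ := hwlip a x0
      _ < (1 + γ * (Lf + Lh)) * δ := by
          exact mul_lt_mul_of_pos_left hax hLw0
      _ ≤ 1 := by
          rw [hδdef]
          rw [mul_one_div, div_le_one (by linarith)]; linarith
  -- gradient/fderiv norms
  have hgf : ∀ a : E, ‖fderiv ℝ f a‖ = ‖gradient f a‖ := by
    intro a
    rw [show gradient f a = (InnerProductSpace.toDual ℝ E).symm (fderiv ℝ f a) from rfl,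
      LinearIsometryEquiv.norm_map]
  have hgh : ∀ a : E, ‖fderiv ℝ h a‖ = ‖gradient h a‖ := by
    intro a
    rw [show gradient h a = (InnerProductSpace.toDual ℝ E).symm (fderiv ℝ h a) from rfl,
      LinearIsometryEquiv.norm_map]
  -- Lipschitz bound for f on the ball
  have hfball : ∀ a ∈ Metric.ball x0 δ, ∀ b ∈ Metric.ball x0 δ,
      |f a - f b| ≤ (‖gradient f x0‖ + Lf) * ‖a - b‖ := by
    intro a ha b hb
    have hbound : ∀ c ∈ Metric.ball x0 δ, ‖fderiv ℝ f c‖ ≤ ‖gradient f x0‖ + Lf := by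
      intro c hc
      have hcx : ‖c - x0‖ < δ := by rw [← dist_eq_norm]; exact hc
      have h1 : ‖gradient f c‖ - ‖gradient f x0‖ ≤ ‖gradient f c - gradient f x0‖ :=
        norm_sub_norm_le _ _
      have h2 := hflip c x0
      have h3 : Lf * ‖c - x0‖ ≤ Lf * 1 := mul_le_mul_of_nonneg_left (by linarith) hLf
      rw [hgf]; linarith
    have := (convex_ball x0 δ).norm_image_sub_le_of_norm_fderiv_le
      (fun c _ => hfd c) hbound hb ha
    rwa [Real.norm_eq_abs] at this
  have hhball : ∀ a ∈ Metric.ball x0 δ, ∀ b ∈ Metric.ball x0 δ,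
      |h a - h b| ≤ (‖gradient h x0‖ + Lh) * ‖a - b‖ := by
    intro a ha b hb
    have hbound : ∀ c ∈ Metric.ball x0 δ, ‖fderiv ℝ h c‖ ≤ ‖gradient h x0‖ + Lh := by
      intro c hc
      have hcx : ‖c - x0‖ < δ := by rw [← dist_eq_norm]; exact hc
      have h1 : ‖gradient h c‖ - ‖gradient h x0‖ ≤ ‖gradient h c - gradient h x0‖ :=
        norm_sub_norm_le _ _
      have h2 := hhlip c x0
      have h3 : Lh * ‖c - x0‖ ≤ Lh * 1 := mul_le_mul_of_nonneg_left (by linarith) hLh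
      rw [hgh]; linarith
    have := (convex_ball x0 δ).norm_image_sub_le_of_norm_fderiv_le
      (fun c _ => hhd c) hbound hb ha
    rwa [Real.norm_eq_abs] at this
  -- squared-norm-of-gradient bound
  have hvbnd : ∀ a ∈ Metric.ball x0 δ, ‖gradient f a + gradient h a‖
      ≤ ‖gradient f x0 + gradient h x0‖ + (Lf + Lh) := by
    intro a ha
    have hax : ‖a - x0‖ < δ := by rw [← dist_eq_norm]; exact ha
    have h1 : ‖gradient f a + gradient h a‖ - ‖gradient f x0 + gradient h x0‖
        ≤ ‖(gradient f a + gradient h a) - (gradient f x0 + gradient h x0)‖ :=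
      norm_sub_norm_le _ _
    have h2 := hvlip a x0
    have h3 : (Lf + Lh) * ‖a - x0‖ ≤ (Lf + Lh) * 1 :=
      mul_le_mul_of_nonneg_left (by linarith) hLv
    linarith
  have hsqball : ∀ a ∈ Metric.ball x0 δ, ∀ b ∈ Metric.ball x0 δ,
      |‖gradient f a + gradient h a‖ ^ 2 - ‖gradient f b + gradient h b‖ ^ 2|
        ≤ 2 * (‖gradient f x0 + gradient h x0‖ + (Lf + Lh)) * (Lf + Lh) * ‖a - b‖ := by
    intro a ha b hb
    have hna := hvbnd a ha
    have hnb := hvbnd b hb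
    have h1 : |‖gradient f a + gradient h a‖ - ‖gradient f b + gradient h b‖|
        ≤ (Lf + Lh) * ‖a - b‖ :=
      le_trans (abs_norm_sub_norm_le _ _) (hvlip a b)
    have hid : ‖gradient f a + gradient h a‖ ^ 2 - ‖gradient f b + gradient h b‖ ^ 2
        = (‖gradient f a + gradient h a‖ - ‖gradient f b + gradient h b‖)
          * (‖gradient f a + gradient h a‖ + ‖gradient f b + gradient h b‖) := by ring
    rw [hid, abs_mul, abs_of_nonneg (by positivity :
      (0:ℝ) ≤ ‖gradient f a + gradient h a‖ + ‖gradient f b + gradient h b‖)]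
    calc |‖gradient f a + gradient h a‖ - ‖gradient f b + gradient h b‖|
          * (‖gradient f a + gradient h a‖ + ‖gradient f b + gradient h b‖)
        ≤ ((Lf + Lh) * ‖a - b‖)
          * (2 * (‖gradient f x0 + gradient h x0‖ + (Lf + Lh))) := by
          apply mul_le_mul h1 (by linarith) (by positivity) (by positivity)
      _ = 2 * (‖gradient f x0 + gradient h x0‖ + (Lf + Lh)) * (Lf + Lh) * ‖a - b‖ := by ring
  refine ⟨Metric.ball x0 δ, Metric.ball_mem_nhds x0 hδ0,
    (‖gradient f x0‖ + Lf) + (‖gradient h x0‖ + Lh)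
      + γ / 2 * (2 * (‖gradient f x0 + gradient h x0‖ + (Lf + Lh)) * (Lf + Lh))
      + KM * (1 + γ * (Lf + Lh)), ?_, ?_⟩
  · have : (0:ℝ) ≤ γ / 2 := by linarith
    have h2 : (0:ℝ) ≤ 2 * (‖gradient f x0 + gradient h x0‖ + (Lf + Lh)) * (Lf + Lh) := by
      positivity
    have h3 : (0:ℝ) ≤ KM * (1 + γ * (Lf + Lh)) := mul_nonneg hKM0 hLw0.le
    positivity
  intro a ha b hb
  have hfa := (hFin a).2.2
  have hfb := (hFin b).2.2
  rw [hfa, hfb]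
  have h1 := abs_le.mp (hfball a ha b hb)
  have h2 := abs_le.mp (hhball a ha b hb)
  have h3 := abs_le.mp (hsqball a ha b hb)
  have h3' : |γ / 2 * (‖gradient f a + gradient h a‖ ^ 2
      - ‖gradient f b + gradient h b‖ ^ 2)|
      ≤ γ / 2 * (2 * (‖gradient f x0 + gradient h x0‖ + (Lf + Lh)) * (Lf + Lh)) * ‖a - b‖ := by
    rw [abs_mul, abs_of_nonneg (by linarith : (0:ℝ) ≤ γ / 2)]
    calc γ / 2 * |‖gradient f a + gradient h a‖ ^ 2 - ‖gradient f b + gradient h b‖ ^ 2|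
        ≤ γ / 2 * (2 * (‖gradient f x0 + gradient h x0‖ + (Lf + Lh)) * (Lf + Lh) * ‖a - b‖) :=
          mul_le_mul_of_nonneg_left (hsqball a ha b hb) (by linarith)
      _ = _ := by ring
  have h3'' := abs_le.mp h3'
  -- Moreau part
  have hwa := hwball a ha
  have hwb := hwball b hb
  have hwd : ‖(a - γ • (gradient f a + gradient h a))
      - (b - γ • (gradient f b + gradient h b))‖ ≤ (1 + γ * (Lf + Lh)) * ‖a - b‖ := hwlip a b
  have hm1 := hKM _ hwa _ hwb
  have hm2 := hKM _ hwb _ hwa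
  rw [norm_sub_rev] at hm2
  have hmd : |(menv g γ (a - γ • (gradient f a + gradient h a))).toReal
      - (menv g γ (b - γ • (gradient f b + gradient h b))).toReal|
      ≤ KM * ((1 + γ * (Lf + Lh)) * ‖a - b‖) := by
    have hKMd : KM * ‖(a - γ • (gradient f a + gradient h a))
        - (b - γ • (gradient f b + gradient h b))‖
        ≤ KM * ((1 + γ * (Lf + Lh)) * ‖a - b‖) := mul_le_mul_of_nonneg_left hwd hKM0
    rw [abs_le]
    constructor <;> linarith
  have hmd' := abs_le.mp hmd
  rw [abs_le]
  constructor <;> nlinarith [h1.1, h1.2, h2.1, h2.2, h3''.1, h3''.2, hmd'.1, hmd'.2]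
end

section
/- Suppose Assumption A holds and in addition g is ρ-weakly convex. Then for every sequence of parameters γ_k > 0 with γ_k → 0, the Davis–Yin envelopes φ_{γ_k}^DY epi-converge to φ = f + g + h; concretely, for every x ∈ ℝ^d: (a) for every sequence x_k → x, liminf_{k→∞} φ_{γ_k}^DY(x_k) ≥ φ(x) (liminf taken in ℝ ∪ {±∞}), and (b) there exists a sequence x_k → x such that limsup_{k→∞} φ_{γ_k}^DY(x_k) ≤ φ(x). -/
open scoped RealInnerProductSpace
open Filter

/-- `g` is `ρ`-weakly convex: `g + (ρ/2)‖·‖²` is convex (extended-real-valued version). -/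
def WeaklyConvexE {E : Type*} [NormedAddCommGroup E] [InnerProductSpace ℝ E]
    (ρ : ℝ) (g : E → EReal) : Prop :=
  ∀ x y : E, ∀ t : ℝ, 0 ≤ t → t ≤ 1 →
    g (t • x + (1 - t) • y) + (((ρ / 2) * ‖t • x + (1 - t) • y‖ ^ 2 : ℝ) : EReal) ≤
      (t : EReal) * (g x + (((ρ / 2) * ‖x‖ ^ 2 : ℝ) : EReal)) +
        ((1 - t : ℝ) : EReal) * (g y + (((ρ / 2) * ‖y‖ ^ 2 : ℝ) : EReal))

lemma ereal_exists_real_le {x : EReal} (hx : x ≠ ⊥) : ∃ r : ℝ, (r : EReal) ≤ x := by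
  induction x with
  | bot => exact absurd rfl hx
  | coe r => exact ⟨r, le_refl _⟩
  | top => exact ⟨0, le_top⟩

lemma ereal_eq_top_of_forall {x : EReal} (h : ∀ r : ℝ, (r : EReal) ≤ x) : x = ⊤ := by
  induction x with
  | bot => exact absurd (h 0) (by simp)
  | coe r => exact absurd (h (r+1)) (by exact_mod_cast (lt_add_one r).not_ge)
  | top => rfl

lemma ereal_le_of_forall_lt {c s : ℝ} {L : EReal}
    (h : ∀ M : ℝ, M < s → ((c + M : ℝ) : EReal) ≤ L) : ((c + s : ℝ) : EReal) ≤ L := by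
  by_contra hcon
  push_neg at hcon
  obtain ⟨u, hu1, hu2⟩ := EReal.exists_between_coe_real hcon
  have hus : u - c < s := by
    have : u < c + s := EReal.coe_lt_coe_iff.1 hu2
    linarith
  have := h (u - c) hus
  rw [show c + (u - c) = u by ring] at this
  exact absurd (this.trans_lt hu1) (lt_irrefl _)

lemma g_quad_lb {E : Type*} [NormedAddCommGroup E] [InnerProductSpace ℝ E]
    (g : E → EReal) (hgbot : ∀ x, g x ≠ ⊥) {γ0 : ℝ}
    (h : ⊥ < ⨅ y : E, (g y + ((1 / (2 * γ0) * ‖y - (0:E)‖ ^ 2 : ℝ) : EReal))) :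
    ∃ c : ℝ, ∀ y : E, ((c - 1 / (2 * γ0) * ‖y‖ ^ 2 : ℝ) : EReal) ≤ g y := by
  obtain ⟨c, hc⟩ := ereal_exists_real_le h.ne'
  refine ⟨c, fun y => ?_⟩
  have h1 : (c : EReal) ≤ g y + ((1 / (2 * γ0) * ‖y‖ ^ 2 : ℝ) : EReal) := by
    have := hc.trans (iInf_le _ y)
    rwa [sub_zero] at this
  rcases eq_top_or_lt_top (g y) with ht | ht
  · rw [ht]; exact le_top
  · lift g y to ℝ using ⟨ht.ne, hgbot y⟩ with s hs
    rw [← EReal.coe_add, EReal.coe_le_coe_iff] at h1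
    exact EReal.coe_le_coe_iff.2 (by linarith)


lemma sq_le_two_sq {a b c : ℝ} (ha : 0 ≤ a) (h : a ≤ b + c) : a^2 ≤ 2*b^2 + 2*c^2 := by
  nlinarith [sq_nonneg (b - c), sq_nonneg (b + c)]

lemma near_real_ineq {V t γk β ip : ℝ} (hγk : 0 < γk) (hβ : β = 1/(2*γk))
    (hip : -(V*t) ≤ ip) : -(γk*V^2/2) ≤ ip + β*t^2 := by
  have hquad : β * t^2 - V*t + γk * V^2/2 = (t - γk * V)^2 / (2 * γk) := by
    rw [hβ]; field_simp; ring
  have hquad0 : 0 ≤ β * t^2 - V*t + γk * V^2/2 := by rw [hquad]; positivity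
  linarith

lemma beta_large {α A γk γstar β : ℝ} (hP : 0 < 2*α+A) (hγk : 0 < γk)
    (hγstar : γstar = 1/(2*(2*α+A))) (h2 : γk < γstar) (hβ : β = 1/(2*γk)) :
    2*α+A < β := by
  rw [hγstar, lt_div_iff₀ (by linarith : (0:ℝ) < 2*(2*α+A))] at h2
  rw [hβ, lt_div_iff₀ (by linarith : (0:ℝ) < 2*γk)]
  nlinarith

lemma far_real_ineq {α A β V δ t K W ny c M Q ip : ℝ}
    (hα : 0 < α) (hA1 : 1 ≤ A) (hδ : 0 < δ)
    (hβ : 2*α + A < β) (ht : δ/2 ≤ t)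
    (hK : K = M - c + 2*α*W^2 + V^2/2)
    (hA : A = 1 + 8 * max K 0 / δ^2)
    (hny : ny^2 ≤ 2*t^2 + 2*W^2)
    (hip : -(V*t) ≤ ip) (hQ : 0 ≤ Q) :
    M - Q ≤ ip + β*t^2 + c - α*ny^2 := by
  have hA0 : (0:ℝ) < A := by linarith
  have ht0 : 0 ≤ t := by linarith
  have s1 : A/2 * t^2 - V^2/(2*A) ≤ A*t^2 - V*t := by
    have hsq : 0 ≤ (A*t - V)^2 / (2*A) := by positivity
    have heq : (A*t - V)^2 / (2*A) = A/2*t^2 - V*t + V^2/(2*A) := by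
      field_simp; ring
    linarith [heq ▸ hsq]
  have s2 : K ≤ A/2 * t^2 := by
    have hAδ : A*δ^2/8 = δ^2/8 + max K 0 := by rw [hA]; field_simp
    have ht2 : δ^2/4 ≤ t^2 := by nlinarith
    have h6 : A * (δ^2/4) ≤ A * t^2 := mul_le_mul_of_nonneg_left ht2 hA0.le
    have h7 : K ≤ max K 0 := le_max_left _ _
    linarith [sq_nonneg δ]
  have s3 : V^2/(2*A) ≤ V^2/2 := by
    apply div_le_div_of_nonneg_left (sq_nonneg V) two_pos
    linarith
  have hαy : α * ny^2 ≤ α * (2*t^2 + 2*W^2) := mul_le_mul_of_nonneg_left hny hα.le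
  have hβt : (2*α + A) * t^2 ≤ β * t^2 := mul_le_mul_of_nonneg_right hβ.le (sq_nonneg t)
  nlinarith [s1, s2, s3, hαy, hβt, hip]

set_option maxHeartbeats 2000000 in
theorem dyEnv_epi_converges
    {E : Type*} [NormedAddCommGroup E] [InnerProductSpace ℝ E] [FiniteDimensional ℝ E]
    (f h : E → ℝ) (g : E → EReal) (Lf Lh γg ρ : ℝ)
    (hLf : 0 ≤ Lf) (hLh : 0 ≤ Lh) (hρ : 0 ≤ ρ)
    (hfd : Differentiable ℝ f)
    (hflip : ∀ x y : E, ‖gradient f x - gradient f y‖ ≤ Lf * ‖x - y‖)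
    (hhd : Differentiable ℝ h)
    (hhlip : ∀ x y : E, ‖gradient h x - gradient h y‖ ≤ Lh * ‖x - y‖)
    (hγg : 0 < γg)
    (hgtop : ∃ x, g x ≠ ⊤) (hgbot : ∀ x, g x ≠ ⊥)
    (hglsc : LowerSemicontinuous g)
    (hpb : ∀ γ : ℝ, 0 < γ → γ < γg → ∀ w : E,
      ⊥ < ⨅ y : E, (g y + ((1 / (2 * γ) * ‖y - w‖ ^ 2 : ℝ) : EReal)))
    (hattain : ∃ xs : E, ∀ x : E,
      (f xs : EReal) + g xs + (h xs : EReal) ≤ (f x : EReal) + g x + (h x : EReal))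
    (hwc : WeaklyConvexE ρ g)
    (γ : ℕ → ℝ) (hγpos : ∀ k, 0 < γ k) (hγ0 : Tendsto γ atTop (nhds 0)) :
    ∀ x : E,
      (∀ xs : ℕ → E, Tendsto xs atTop (nhds x) →
        (f x : EReal) + g x + (h x : EReal) ≤
          atTop.liminf (fun k => dyEnv f h g (γ k) (xs k))) ∧
      (∃ xs : ℕ → E, Tendsto xs atTop (nhds x) ∧
        atTop.limsup (fun k => dyEnv f h g (γ k) (xs k)) ≤
          (f x : EReal) + g x + (h x : EReal)) := by
  intro x
  constructor
  · -- liminf inequality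
    intro xs hxs
    set L := atTop.liminf (fun k => dyEnv f h g (γ k) (xs k)) with hLdef
    obtain ⟨c, hc⟩ := g_quad_lb g hgbot (hpb (γg/2) (by linarith) (by linarith) 0)
    set α : ℝ := 1 / (2 * (γg/2)) with hαdef
    have hα : 0 < α := by rw [hαdef]; positivity
    have key : ∀ M : ℝ, (M : EReal) < g x → ((f x + h x + M : ℝ) : EReal) ≤ L := by
      intro M hM
      obtain ⟨δ, hδpos, hδ⟩ := Metric.eventually_nhds_iff.1 (hglsc x (M : EReal) hM)
      set Vf : ℝ := ‖gradient f x‖ + Lf with hVfdef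
      set Vh : ℝ := ‖gradient h x‖ + Lh with hVhdef
      set V : ℝ := Vf + Vh with hVdef
      have hVf0 : 0 ≤ Vf := by rw [hVfdef]; positivity
      have hVh0 : 0 ≤ Vh := by rw [hVhdef]; positivity
      have hV0 : 0 ≤ V := by rw [hVdef]; linarith
      set W : ℝ := ‖x‖ + 1 with hWdef
      set K : ℝ := M - c + 2*α*W^2 + V^2/2 with hKdef
      set A : ℝ := 1 + 8 * max K 0 / δ^2 with hAdef
      have hA1 : 1 ≤ A := by
        rw [hAdef]
        have : 0 ≤ 8 * max K 0 / δ^2 := by positivity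
        linarith
      have hA0 : 0 < A := by linarith
      set γstar : ℝ := 1 / (2 * (2*α + A)) with hγstardef
      have hP0 : 0 < 2*α + A := by linarith
      have hγstar : 0 < γstar := by rw [hγstardef]; positivity
      have hev : ∀ᶠ k in atTop,
          ((f (xs k) + h (xs k) + M - γ k * V^2/2 : ℝ) : EReal) ≤ dyEnv f h g (γ k) (xs k) := by
        have e1 : ∀ᶠ k in atTop, dist (xs k) x < min (δ/2) 1 :=
          Metric.tendsto_nhds.mp hxs _ (lt_min (by linarith) one_pos)
        have e2 : ∀ᶠ k in atTop, γ k < γstar := hγ0.eventually (gt_mem_nhds hγstar)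
        filter_upwards [e1, e2] with k h1 h2
        have hγk : 0 < γ k := hγpos k
        set w : E := xs k with hwdef
        have hwx1 : ‖w - x‖ ≤ 1 := by
          rw [← dist_eq_norm]
          exact le_of_lt (lt_of_lt_of_le h1 (min_le_right _ _))
        have hwxδ : dist w x < δ/2 := lt_of_lt_of_le h1 (min_le_left _ _)
        have hgradf : ‖gradient f w‖ ≤ Vf := by
          have h3 := hflip w x
          have h4 := norm_add_le (gradient f w - gradient f x) (gradient f x)
          rw [sub_add_cancel] at h4
          have h5 : Lf * ‖w - x‖ ≤ Lf * 1 := mul_le_mul_of_nonneg_left hwx1 hLf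
          rw [hVfdef]; linarith
        have hgradh : ‖gradient h w‖ ≤ Vh := by
          have h3 := hhlip w x
          have h4 := norm_add_le (gradient h w - gradient h x) (gradient h x)
          rw [sub_add_cancel] at h4
          have h5 : Lh * ‖w - x‖ ≤ Lh * 1 := mul_le_mul_of_nonneg_left hwx1 hLh
          rw [hVhdef]; linarith
        rw [dyEnv]
        set β : ℝ := 1 / (2 * γ k) with hβdef
        have hβ0 : 0 < β := by rw [hβdef]; positivity
        have hβlarge : 2*α + A < β := beta_large hP0 hγk hγstardef h2 hβdef
        refine le_iInf fun y => ?_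
        set t : ℝ := ‖y - w‖ with htdef
        have ht0 : 0 ≤ t := htdef ▸ norm_nonneg _
        have hipf : -(Vf * t) ≤ ⟪gradient f w, y - w⟫ := by
          have h3 := abs_real_inner_le_norm (gradient f w) (y - w)
          have h4 : ‖gradient f w‖ * t ≤ Vf * t := mul_le_mul_of_nonneg_right hgradf ht0
          have h5 := neg_abs_le ⟪gradient f w, y - w⟫
          rw [htdef] at h4
          linarith
        have hiph : -(Vh * t) ≤ ⟪gradient h w, y - w⟫ := by
          have h3 := abs_real_inner_le_norm (gradient h w) (y - w)
          have h4 : ‖gradient h w‖ * t ≤ Vh * t := mul_le_mul_of_nonneg_right hgradh ht0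
          have h5 := neg_abs_le ⟪gradient h w, y - w⟫
          rw [htdef] at h4
          linarith
        by_cases hy : dist y x < δ
        · -- near case
          have hgy : (M : EReal) ≤ g y := (hδ hy).le
          have hipsum : -(V*t) ≤ ⟪gradient f w, y - w⟫ + ⟪gradient h w, y - w⟫ := by
            rw [hVdef]; linarith [hipf, hiph]
          have hnear := near_real_ineq hγk hβdef hipsum
          have hreal : f w + h w - γ k * V^2/2 ≤
              f w + ⟪gradient f w, y - w⟫ + h w + ⟪gradient h w, y - w⟫ + β * t^2 := by
            linarith [hnear]
          calc ((f w + h w + M - γ k * V^2/2 : ℝ) : EReal)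
              = ((f w + h w - γ k * V^2/2 : ℝ) : EReal) + (M : EReal) := by
                rw [← EReal.coe_add]; exact EReal.coe_eq_coe_iff.2 (by ring)
            _ ≤ ((f w + ⟪gradient f w, y - w⟫ + h w + ⟪gradient h w, y - w⟫
                  + β * t^2 : ℝ) : EReal) + g y :=
                add_le_add (EReal.coe_le_coe_iff.2 hreal) hgy
        · -- far case
          push_neg at hy
          have htlb : δ/2 ≤ t := by
            have h3 := dist_triangle y w x
            simp only [dist_eq_norm] at h3 hy hwxδ
            rw [htdef]
            linarith [hy]
          have hyn : ‖y‖ ≤ t + W := by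
            have h3 := norm_add_le (y - w) w
            rw [sub_add_cancel] at h3
            have h4 := norm_add_le (w - x) x
            rw [sub_add_cancel] at h4
            rw [htdef, hWdef]
            linarith
          have hyn2 : ‖y‖^2 ≤ 2*t^2 + 2*W^2 := sq_le_two_sq (norm_nonneg y) hyn
          have hipsum : -(V*t) ≤ ⟪gradient f w, y - w⟫ + ⟪gradient h w, y - w⟫ := by
            rw [hVdef]; linarith [hipf, hiph]
          have hγV : 0 ≤ γ k * V^2/2 := by positivity
          have hfar := far_real_ineq hα hA1 hδpos hβlarge htlb hKdef hAdef hyn2 hipsum hγV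
          have hreal : f w + h w + M - γ k * V^2/2 ≤
              (f w + ⟪gradient f w, y - w⟫ + h w + ⟪gradient h w, y - w⟫
                + β * t^2) + (c - α * ‖y‖^2) := by
            linarith [hfar]
          calc ((f w + h w + M - γ k * V^2/2 : ℝ) : EReal)
              ≤ (((f w + ⟪gradient f w, y - w⟫ + h w + ⟪gradient h w, y - w⟫
                  + β * t^2) + (c - α * ‖y‖^2) : ℝ) : EReal) :=
                EReal.coe_le_coe_iff.2 hreal
            _ = ((f w + ⟪gradient f w, y - w⟫ + h w + ⟪gradient h w, y - w⟫
                  + β * t^2 : ℝ) : EReal) + ((c - α * ‖y‖^2 : ℝ) : EReal) :=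
                EReal.coe_add _ _
            _ ≤ ((f w + ⟪gradient f w, y - w⟫ + h w + ⟪gradient h w, y - w⟫
                  + β * t^2 : ℝ) : EReal) + g y :=
                add_le_add_right (hc y) _
      have htend : Tendsto (fun k => ((f (xs k) + h (xs k) + M - γ k * V^2/2 : ℝ) : EReal))
          atTop (nhds ((f x + h x + M : ℝ) : EReal)) := by
        rw [EReal.tendsto_coe]
        have h1 : Tendsto (fun k => f (xs k) + h (xs k) + M - γ k * V^2/2) atTop
            (nhds (f x + h x + M - 0 * (V^2/2))) := by
          apply Tendsto.sub
          · exact (((hfd.continuous.tendsto x).comp hxs).add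
              ((hhd.continuous.tendsto x).comp hxs)).add tendsto_const_nhds
          · have := hγ0.mul_const (V^2/2)
            simpa [mul_div_assoc] using this
        simpa using h1
      calc ((f x + h x + M : ℝ) : EReal)
          = atTop.liminf (fun k => ((f (xs k) + h (xs k) + M - γ k * V^2/2 : ℝ) : EReal)) :=
            (htend.liminf_eq).symm
        _ ≤ L := liminf_le_liminf hev
    rcases eq_top_or_lt_top (g x) with htop | hlt
    · have hLtop : L = ⊤ := by
        apply ereal_eq_top_of_forall
        intro r
        have := key (r - f x - h x) (by rw [htop]; exact EReal.coe_lt_top _)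
        rw [show f x + h x + (r - f x - h x) = r by ring] at this
        exact this
      rw [htop, hLtop]
      exact le_top
    · lift g x to ℝ using ⟨hlt.ne, hgbot x⟩ with s hs
      have hfin : ((f x + h x + s : ℝ) : EReal) ≤ L :=
        ereal_le_of_forall_lt (fun M hM => key M (EReal.coe_lt_coe_iff.2 hM))
      refine le_trans (le_of_eq ?_) hfin
      norm_cast
      ring
  · -- limsup inequality: constant sequence
    refine ⟨fun _ => x, tendsto_const_nhds, ?_⟩
    have hb : ∀ k : ℕ, dyEnv f h g (γ k) x ≤ (f x : EReal) + g x + (h x : EReal) := by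
      intro k
      have h1 : dyEnv f h g (γ k) x ≤
          ((f x + ⟪gradient f x, x - x⟫ + h x + ⟪gradient h x, x - x⟫
            + 1 / (2 * γ k) * ‖x - x‖^2 : ℝ) : EReal) + g x := iInf_le _ x
      have h2 : (f x + ⟪gradient f x, x - x⟫ + h x + ⟪gradient h x, x - x⟫
          + 1 / (2 * γ k) * ‖x - x‖^2 : ℝ) = f x + h x := by
        simp [sub_self, inner_zero_right]
      rw [h2] at h1
      calc dyEnv f h g (γ k) x ≤ ((f x + h x : ℝ) : EReal) + g x := h1
        _ = (f x : EReal) + g x + (h x : EReal) := by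
          rw [EReal.coe_add, add_right_comm]
    exact limsup_le_of_le (h := Eventually.of_forall hb)
end

section
/- Suppose Assumption A holds, f and h are twice continuously differentiable with Lipschitz continuous Hessians, and g is ρ-weakly convex. Then for every γ ∈ (0, min{1/ρ, 1/L_f}), the Davis–Yin envelope φ_γ^DY is real-valued and continuously differentiable on ℝ^d, with gradient ∇φ_γ^DY(x) = (1/γ)(x − Y_γ(x)) − ∇²(f+h)(x) (x − Y_γ(x)) for every x ∈ ℝ^d, where ∇²(f+h)(x) denotes the Hessian of f + h at x acting as a linear map. -/
open scoped RealInnerProductSpace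

lemma midpt_norm_sq {E : Type*} [NormedAddCommGroup E] [InnerProductSpace ℝ E] (a b : E) :
    ‖(1/2:ℝ) • a + (1-(1/2):ℝ) • b‖^2 = 1/2*‖a‖^2 + 1/2*‖b‖^2 - 1/4*‖a-b‖^2 := by
  have h : ∀ z : E, ‖z‖^2 = ⟪z, z⟫ := fun z => by rw [← real_inner_self_eq_norm_sq]
  simp only [h]
  simp only [inner_add_add_self, inner_sub_sub_self, real_inner_smul_left, real_inner_smul_right,
    real_inner_comm a b]
  ring

lemma quad_growth {E : Type*} [NormedAddCommGroup E] [InnerProductSpace ℝ E]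
    (γ ρ : ℝ) (hγ0 : 0 < γ) (g : E → EReal) (hgbot : ∀ x, g x ≠ ⊥)
    (hwc : WeaklyConvexE ρ g) (w p : E)
    (hp : ∀ z : E, g p + ((1/(2*γ)*‖p-w‖^2 : ℝ) : EReal) ≤ g z + ((1/(2*γ)*‖z-w‖^2 : ℝ) : EReal))
    (y : E) (ry rp : ℝ) (hry : g y = (ry : EReal)) (hrp : g p = (rp : EReal)) :
    rp + 1/(2*γ)*‖p-w‖^2 + ((1/γ-ρ)/4)*‖y-p‖^2 ≤ ry + 1/(2*γ)*‖y-w‖^2 := by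
  set m := (1/2:ℝ) • y + (1-(1/2):ℝ) • p with hm
  have hwc' := hwc y p (1/2) (by norm_num) (by norm_num)
  rw [← hm, hry, hrp] at hwc'
  have hmtop : g m ≠ ⊤ := by
    intro htop
    rw [htop, EReal.top_add_of_ne_bot (EReal.coe_ne_bot _)] at hwc'
    have h2 : (((1/2:ℝ):EReal) * ((ry:EReal) + ((ρ/2*‖y‖^2 : ℝ):EReal)) +
        ((1-1/2:ℝ):EReal) * ((rp:EReal) + ((ρ/2*‖p‖^2 : ℝ):EReal))) =
        (((1/2)*(ry + ρ/2*‖y‖^2) + (1-1/2)*(rp + ρ/2*‖p‖^2) : ℝ) : EReal) := by norm_cast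
    rw [h2, top_le_iff] at hwc'
    exact (EReal.coe_ne_top _) hwc'
  obtain ⟨rm, hrm⟩ : ∃ rm : ℝ, g m = (rm : EReal) := by
    lift g m to ℝ using ⟨hmtop, hgbot m⟩ with rm hrm
    exact ⟨rm, rfl⟩
  rw [hrm] at hwc'
  norm_cast at hwc'
  have hpm := hp m
  rw [hrp, hrm] at hpm
  norm_cast at hpm
  have hm1 : ‖m‖^2 = 1/2*‖y‖^2 + 1/2*‖p‖^2 - 1/4*‖y-p‖^2 := midpt_norm_sq y p
  have hm2 : ‖m - w‖^2 = 1/2*‖y-w‖^2 + 1/2*‖p-w‖^2 - 1/4*‖y-p‖^2 := by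
    have e1 : m - w = (1/2:ℝ) • (y-w) + (1-(1/2):ℝ) • (p-w) := by
      rw [hm]; module
    have e2 : (y-w) - (p-w) = y - p := by abel
    rw [e1, midpt_norm_sq, e2]
  rw [hm1] at hwc'
  rw [hm2] at hpm
  have h3 : (1/γ)*‖y-p‖^2 = 2*((1/(2*γ))*‖y-p‖^2) := by field_simp
  have h4 : ((1/γ-ρ)/4)*‖y-p‖^2 = ((1/γ)*‖y-p‖^2)/4 - (ρ*‖y-p‖^2)/4 := by ring
  rw [h4, h3]
  nlinarith [hwc', hpm]

lemma four_norm_ident {E : Type*} [NormedAddCommGroup E] [InnerProductSpace ℝ E] (p₁ p₂ w₁ w₂ : E) :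
    ‖p₂-w₁‖^2 - ‖p₁-w₁‖^2 + ‖p₁-w₂‖^2 - ‖p₂-w₂‖^2 = 2*⟪p₁-p₂, w₁-w₂⟫ := by
  have h : ∀ z : E, ‖z‖^2 = ⟪z, z⟫ := fun z => by rw [← real_inner_self_eq_norm_sq]
  simp only [h]
  simp only [inner_sub_left, inner_sub_right]
  simp [real_inner_comm]
  ring

lemma prox_lip {E : Type*} [NormedAddCommGroup E] [InnerProductSpace ℝ E]
    (γ ρ : ℝ) (hγ0 : 0 < γ) (hγρ : γ*ρ < 1) (g : E → EReal) (hgbot : ∀ x, g x ≠ ⊥)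
    (hwc : WeaklyConvexE ρ g) (w₁ w₂ p₁ p₂ : E)
    (hp₁ : ∀ z : E, g p₁ + ((1/(2*γ)*‖p₁-w₁‖^2 : ℝ) : EReal) ≤ g z + ((1/(2*γ)*‖z-w₁‖^2 : ℝ) : EReal))
    (hp₂ : ∀ z : E, g p₂ + ((1/(2*γ)*‖p₂-w₂‖^2 : ℝ) : EReal) ≤ g z + ((1/(2*γ)*‖z-w₂‖^2 : ℝ) : EReal))
    (r₁ r₂ : ℝ) (hr₁ : g p₁ = (r₁ : EReal)) (hr₂ : g p₂ = (r₂ : EReal)) :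
    ‖p₁ - p₂‖ ≤ (2/(1-γ*ρ)) * ‖w₁-w₂‖ := by
  have hμ : (0:ℝ) < 1 - γ*ρ := by linarith
  have QG1 := quad_growth γ ρ hγ0 g hgbot hwc w₁ p₁ hp₁ p₂ r₂ r₁ hr₂ hr₁
  have QG2 := quad_growth γ ρ hγ0 g hgbot hwc w₂ p₂ hp₂ p₁ r₁ r₂ hr₁ hr₂
  have hid := four_norm_ident p₁ p₂ w₁ w₂
  have hcs := real_inner_le_norm (p₁-p₂) (w₁-w₂)
  have hrev : ‖p₂-p₁‖ = ‖p₁-p₂‖ := norm_sub_rev _ _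
  have hid' : (1/(2*γ))*‖p₂-w₁‖^2 - (1/(2*γ))*‖p₁-w₁‖^2 + (1/(2*γ))*‖p₁-w₂‖^2
      - (1/(2*γ))*‖p₂-w₂‖^2 = (1/(2*γ))*(2*⟪p₁-p₂, w₁-w₂⟫) := by
    rw [show (1/(2*γ))*‖p₂-w₁‖^2 - (1/(2*γ))*‖p₁-w₁‖^2 + (1/(2*γ))*‖p₁-w₂‖^2
      - (1/(2*γ))*‖p₂-w₂‖^2 = (1/(2*γ))*(‖p₂-w₁‖^2 - ‖p₁-w₁‖^2 + ‖p₁-w₂‖^2 - ‖p₂-w₂‖^2)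
      from by ring, hid]
  rw [hrev] at QG1
  set n := ‖p₁ - p₂‖ with hn
  set m := ‖w₁ - w₂‖ with hm
  have sum : ((1/γ-ρ)/2)*n^2 ≤ (1/(2*γ))*(2*⟪p₁-p₂, w₁-w₂⟫) := by linarith
  have e1 : (1/(2*γ))*(2*⟪p₁-p₂, w₁-w₂⟫) = (1/γ)*⟪p₁-p₂, w₁-w₂⟫ := by
    field_simp
  have e2 : (1/γ)*⟪p₁-p₂, w₁-w₂⟫ ≤ (1/γ)*(n*m) := by
    apply mul_le_mul_of_nonneg_left _ (by positivity)
    exact hcs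
  have key2 : (1/γ-ρ)/2*n^2 ≤ (1/γ)*(n*m) := by linarith [sum, e2, e1.le, e1.ge]
  have e3 : γ*((1/γ-ρ)/2*n^2) = (1-γ*ρ)/2*n^2 := by field_simp
  have e4 : γ*((1/γ)*(n*m)) = n*m := by field_simp
  have k3 : (1-γ*ρ)/2*n^2 ≤ n*m := by
    rw [← e3, ← e4]
    exact mul_le_mul_of_nonneg_left key2 hγ0.le
  rcases eq_or_lt_of_le (norm_nonneg (p₁ - p₂)) with hz | hz
  · rw [hn, ← hz]; positivity
  · have h5 : (1-γ*ρ)*n ≤ 2*m := by nlinarith [k3, hz]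
    rw [show (2/(1-γ*ρ))*m = (2*m)/(1-γ*ρ) from by ring, le_div_iff₀ hμ]
    linarith

lemma complete_square {E : Type*} [NormedAddCommGroup E] [InnerProductSpace ℝ E]
    (γ : ℝ) (hγ0 : 0 < γ) (a v : E) :
    1/(2*γ)*‖a + γ•v‖^2 = 1/(2*γ)*‖a‖^2 + ⟪v, a⟫ + γ/2*‖v‖^2 := by
  rw [norm_add_sq_real, real_inner_smul_right, norm_smul, Real.norm_eq_abs, abs_of_pos hγ0,
    mul_pow, real_inner_comm]
  field_simp

lemma dyEnv_eq {E : Type*} [NormedAddCommGroup E] [InnerProductSpace ℝ E] [CompleteSpace E]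
    (f h : E → ℝ) (g : E → EReal) (hgbot : ∀ x, g x ≠ ⊥) (γ : ℝ) (hγ0 : 0 < γ)
    (x p w : E) (hw : w = x - γ • (gradient f x + gradient h x))
    (hp : ∀ z : E, g p + ((1/(2*γ)*‖p-w‖^2 : ℝ) : EReal) ≤ g z + ((1/(2*γ)*‖z-w‖^2 : ℝ) : EReal))
    (rp : ℝ) (hrp : g p = (rp : EReal)) :
    dyEnv f h g γ x = ((f x + h x - γ/2*‖gradient f x + gradient h x‖^2
      + (rp + 1/(2*γ)*‖p-w‖^2) : ℝ) : EReal) := by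
  set v : E := gradient f x + gradient h x with hv
  have hkey : ∀ y : E, f x + ⟪gradient f x, y - x⟫ + h x + ⟪gradient h x, y - x⟫
      + 1/(2*γ)*‖y-x‖^2 = (f x + h x - γ/2*‖v‖^2) + 1/(2*γ)*‖y-w‖^2 := by
    intro y
    have e1 : y - w = (y - x) + γ • v := by rw [hw]; abel
    rw [e1, complete_square γ hγ0 (y-x) v, hv, inner_add_left]
    ring
  apply le_antisymm
  · calc dyEnv f h g γ x ≤ ((f x + ⟪gradient f x, p - x⟫ + h x + ⟪gradient h x, p - x⟫
          + 1/(2*γ)*‖p-x‖^2 : ℝ) : EReal) + g p := iInf_le _ p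
    _ = _ := by
        rw [hrp, hkey p]
        norm_cast
        ring
  · apply le_iInf
    intro y
    by_cases hy : g y = ⊤
    · rw [hy, EReal.add_top_of_ne_bot (EReal.coe_ne_bot _)]
      exact le_top
    · obtain ⟨ry, hry⟩ : ∃ ry : ℝ, g y = (ry : EReal) := by
        lift g y to ℝ using ⟨hy, hgbot y⟩ with ry hry
        exact ⟨ry, rfl⟩
      have hpy := hp y
      rw [hrp, hry] at hpy
      rw [hry]
      norm_cast at hpy ⊢
      rw [hkey y]
      linarith

lemma gradient_eq_comp {E : Type*} [NormedAddCommGroup E] [InnerProductSpace ℝ E]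
    [CompleteSpace E] (F : E → ℝ) :
    gradient F = ⇑(InnerProductSpace.toDual ℝ E).symm ∘ (fderiv ℝ F) := rfl

lemma gradient_contDiff {E : Type*} [NormedAddCommGroup E] [InnerProductSpace ℝ E]
    [CompleteSpace E] (F : E → ℝ) (hF : ContDiff ℝ 2 F) : ContDiff ℝ 1 (gradient F) := by
  rw [gradient_eq_comp]
  exact (InnerProductSpace.toDual ℝ E).symm.contDiff.comp (hF.fderiv_right (by norm_num))

lemma inner_fderiv_gradient {E : Type*} [NormedAddCommGroup E] [InnerProductSpace ℝ E]
    [CompleteSpace E] (F : E → ℝ) (hF : ContDiff ℝ 2 F) (x u z : E) :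
    ⟪z, fderiv ℝ (gradient F) x u⟫ = fderiv ℝ (fderiv ℝ F) x u z := by
  have hB : HasFDerivAt (gradient F) (fderiv ℝ (gradient F) x) x :=
    ((gradient_contDiff F hF).differentiable (by norm_num) x).hasFDerivAt
  have hfd' : HasFDerivAt (fderiv ℝ F) (fderiv ℝ (fderiv ℝ F) x) x :=
    ((hF.fderiv_right (m := 1) (by norm_num)).differentiable (by norm_num) x).hasFDerivAt
  have h1 : HasFDerivAt (fun y => (innerSL ℝ z) (gradient F y))
      ((innerSL ℝ z).comp (fderiv ℝ (gradient F) x)) x :=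
    (innerSL ℝ z).hasFDerivAt.comp x hB
  have h2 : HasFDerivAt (fun y => (ContinuousLinearMap.apply ℝ ℝ z) (fderiv ℝ F y))
      ((ContinuousLinearMap.apply ℝ ℝ z).comp (fderiv ℝ (fderiv ℝ F) x)) x :=
    (ContinuousLinearMap.apply ℝ ℝ z).hasFDerivAt.comp x hfd'
  have heq : (fun y => (innerSL ℝ z) (gradient F y))
      = fun y => (ContinuousLinearMap.apply ℝ ℝ z) (fderiv ℝ F y) := by
    funext y
    simp only [innerSL_apply_apply, ContinuousLinearMap.apply_apply]
    rw [real_inner_comm]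
    exact InnerProductSpace.toDual_symm_apply
  rw [heq] at h1
  have := h1.unique h2
  have happ := congrArg (fun (T : E →L[ℝ] ℝ) => T u) this
  simpa using happ

lemma grad_fderiv_symm {E : Type*} [NormedAddCommGroup E] [InnerProductSpace ℝ E]
    [CompleteSpace E] (F : E → ℝ) (hF : ContDiff ℝ 2 F) (x u z : E) :
    ⟪fderiv ℝ (gradient F) x u, z⟫ = ⟪fderiv ℝ (gradient F) x z, u⟫ := by
  have hsymm := (hF.contDiffAt (x := x)).isSymmSndFDerivAt (by norm_num)
  have e1 := inner_fderiv_gradient F hF x u z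
  have e2 := inner_fderiv_gradient F hF x z u
  rw [real_inner_comm] at e1 e2
  rw [e1, e2]
  exact hsymm.eq u z


lemma sandwich_abs (γ A B C nu na nb R0 R1 dYu : ℝ) (hγ0 : 0 < γ)
    (hup : R1 + 1/(2*γ)*(nb - 2*B + nu) ≤ R0 + 1/(2*γ)*(na - 2*A + nu))
    (hlo : R0 + 1/(2*γ)*na ≤ R1 + 1/(2*γ)*nb)
    (hC : C = -((1/γ)*A))
    (habs : |B - A| ≤ dYu) (hnu : 0 ≤ nu) (hdYu : 0 ≤ dYu) :
    |(R1 + 1/(2*γ)*(nb - 2*B + nu)) - (R0 + 1/(2*γ)*na) - C|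
      ≤ 1/(2*γ)*nu + (1/γ)*dYu := by
  subst hC
  rw [sub_neg_eq_add]
  have eB : 1/(2*γ)*(nb - 2*B + nu) = 1/(2*γ)*nb - (1/γ)*B + 1/(2*γ)*nu := by
    field_simp
  have eA : 1/(2*γ)*(na - 2*A + nu) = 1/(2*γ)*na - (1/γ)*A + 1/(2*γ)*nu := by
    field_simp
  rw [eB] at hup ⊢
  rw [eA] at hup
  have hg : (0:ℝ) ≤ 1/γ := by positivity
  have hg2 : (0:ℝ) ≤ 1/(2*γ) := by positivity
  obtain ⟨hL, hU⟩ := abs_le.mp habs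
  have hm1 : (1/γ)*(B-A) ≤ (1/γ)*dYu := mul_le_mul_of_nonneg_left hU hg
  have hm2 : (1/γ)*(-dYu) ≤ (1/γ)*(B-A) := mul_le_mul_of_nonneg_left hL hg
  have hm3 : (0:ℝ) ≤ 1/(2*γ)*nu := mul_nonneg hg2 hnu
  have hm4 : (0:ℝ) ≤ (1/γ)*dYu := mul_nonneg hg hdYu
  rw [abs_le]
  constructor <;> nlinarith [hup, hlo, hm1, hm2, hm3, hm4]


set_option maxHeartbeats 2000000 in
theorem dyEnv_differentiable_with_gradient
    {E : Type*} [NormedAddCommGroup E] [InnerProductSpace ℝ E] [FiniteDimensional ℝ E]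
    (f h : E → ℝ) (g : E → EReal) (Lf Lh γg ρ : ℝ)
    (hLf : 0 ≤ Lf) (hLh : 0 ≤ Lh) (hρ : 0 ≤ ρ)
    (hfd : Differentiable ℝ f)
    (hflip : ∀ x y : E, ‖gradient f x - gradient f y‖ ≤ Lf * ‖x - y‖)
    (hhd : Differentiable ℝ h)
    (hhlip : ∀ x y : E, ‖gradient h x - gradient h y‖ ≤ Lh * ‖x - y‖)
    (hfC2 : ContDiff ℝ 2 f) (hhC2 : ContDiff ℝ 2 h)
    (hfHess : ∃ M : ℝ, ∀ x y : E,
      ‖fderiv ℝ (gradient f) x - fderiv ℝ (gradient f) y‖ ≤ M * ‖x - y‖)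
    (hhHess : ∃ M : ℝ, ∀ x y : E,
      ‖fderiv ℝ (gradient h) x - fderiv ℝ (gradient h) y‖ ≤ M * ‖x - y‖)
    (hγg : 0 < γg)
    (hgtop : ∃ x, g x ≠ ⊤) (hgbot : ∀ x, g x ≠ ⊥)
    (hglsc : LowerSemicontinuous g)
    (hpb : ∀ γ' : ℝ, 0 < γ' → γ' < γg → ∀ w : E,
      ⊥ < ⨅ y : E, (g y + ((1 / (2 * γ') * ‖y - w‖ ^ 2 : ℝ) : EReal)))
    (hattain : ∃ xs : E, ∀ x : E,
      (f xs : EReal) + g xs + (h xs : EReal) ≤ (f x : EReal) + g x + (h x : EReal))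
    (hwc : WeaklyConvexE ρ g)
    (γ : ℝ) (hγ0 : 0 < γ) (hγρ : γ * ρ < 1) (hγf : γ * Lf < 1)
    (Y : E → E)
    (hY : ∀ x : E, ∀ z : E,
      g (Y x) + ((1 / (2 * γ) *
        ‖Y x - (x - γ • gradient (fun w => f w + h w) x)‖ ^ 2 : ℝ) : EReal) ≤
      g z + ((1 / (2 * γ) *
        ‖z - (x - γ • gradient (fun w => f w + h w) x)‖ ^ 2 : ℝ) : EReal))
    (hYuniq : ∀ x y' : E, (∀ z : E,
      g y' + ((1 / (2 * γ) *
        ‖y' - (x - γ • gradient (fun w => f w + h w) x)‖ ^ 2 : ℝ) : EReal) ≤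
      g z + ((1 / (2 * γ) *
        ‖z - (x - γ • gradient (fun w => f w + h w) x)‖ ^ 2 : ℝ) : EReal)) → y' = Y x) :
    (∀ x : E, dyEnv f h g γ x ≠ ⊤ ∧ dyEnv f h g γ x ≠ ⊥) ∧
      ContDiff ℝ 1 (fun x : E => (dyEnv f h g γ x).toReal) ∧
      ∀ x : E, gradient (fun x : E => (dyEnv f h g γ x).toReal) x =
        (1 / γ) • (x - Y x) -
          fderiv ℝ (gradient (fun w => f w + h w)) x (x - Y x) := by
  classical
  have hFgrad : ∀ x : E, HasGradientAt (fun w => f w + h w) (gradient f x + gradient h x) x := by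
    intro x
    rw [hasGradientAt_iff_hasFDerivAt, map_add]
    exact ((hfd x).hasGradientAt.hasFDerivAt).add ((hhd x).hasGradientAt.hasFDerivAt)
  have hgradsum : ∀ x : E, gradient (fun w => f w + h w) x = gradient f x + gradient h x :=
    fun x => (hFgrad x).gradient
  set v : E → E := fun x => gradient f x + gradient h x with hv
  set w : E → E := fun x => x - γ • v x with hwdef
  have hY' : ∀ x z : E, g (Y x) + ((1/(2*γ)*‖Y x - w x‖^2 : ℝ) : EReal)
      ≤ g z + ((1/(2*γ)*‖z - w x‖^2 : ℝ) : EReal) := by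
    intro x z
    have t := hY x z
    rw [hgradsum x] at t
    simpa only [hwdef, hv] using t
  obtain ⟨z₀, hz₀⟩ := hgtop
  have hYreal : ∀ x : E, ∃ r : ℝ, g (Y x) = (r : EReal) := by
    intro x
    have hYtop : g (Y x) ≠ ⊤ := by
      intro htop
      have t := hY' x z₀
      rw [htop, EReal.top_add_of_ne_bot (EReal.coe_ne_bot _), top_le_iff] at t
      exact (EReal.add_lt_top hz₀ (EReal.coe_ne_top _)).ne t
    lift g (Y x) to ℝ using ⟨hYtop, hgbot _⟩ with r hr
    exact ⟨r, rfl⟩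
  choose R hR using hYreal
  have hrep : ∀ x : E, dyEnv f h g γ x
      = ((f x + h x - γ/2*‖v x‖^2 + (R x + 1/(2*γ)*‖Y x - w x‖^2) : ℝ) : EReal) := by
    intro x
    exact dyEnv_eq f h g hgbot γ hγ0 x (Y x) (w x) (by rw [hwdef, hv]) (hY' x) (R x) (hR x)
  set Φ : E → ℝ := fun x => f x + h x - γ/2*‖v x‖^2 + (R x + 1/(2*γ)*‖Y x - w x‖^2) with hΦ
  have htoReal : (fun x : E => (dyEnv f h g γ x).toReal) = Φ := by
    funext x
    rw [hrep x]
    exact EReal.toReal_coe _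
  -- Lipschitz facts
  have hKw : ∀ x x' : E, ‖w x - w x'‖ ≤ (1 + γ*(Lf+Lh)) * ‖x - x'‖ := by
    intro x x'
    have e1 : w x - w x' = (x - x') - γ • (v x - v x') := by
      simp only [hwdef]; rw [smul_sub]; abel
    have e2 : v x - v x' = (gradient f x - gradient f x') + (gradient h x - gradient h x') := by
      simp only [hv]; abel
    calc ‖w x - w x'‖ ≤ ‖x - x'‖ + ‖γ • (v x - v x')‖ := by
          rw [e1]; exact norm_sub_le _ _
      _ ≤ ‖x - x'‖ + γ * ((Lf + Lh) * ‖x - x'‖) := by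
          rw [norm_smul, Real.norm_eq_abs, abs_of_pos hγ0]
          have : ‖v x - v x'‖ ≤ (Lf + Lh) * ‖x - x'‖ := by
            rw [e2]
            calc ‖_ + _‖ ≤ ‖gradient f x - gradient f x'‖ + ‖gradient h x - gradient h x'‖ :=
                  norm_add_le _ _
              _ ≤ (Lf + Lh) * ‖x - x'‖ := by
                  have := hflip x x'; have := hhlip x x'; nlinarith [norm_nonneg (x - x')]
          nlinarith [hγ0.le]
      _ = (1 + γ*(Lf+Lh)) * ‖x - x'‖ := by ring
  have hKw0 : (0:ℝ) ≤ 1 + γ*(Lf+Lh) := by nlinarith [hγ0.le]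
  have hYlipw : ∀ x x' : E, ‖Y x - Y x'‖ ≤ (2/(1-γ*ρ)) * ‖w x - w x'‖ := fun x x' =>
    prox_lip γ ρ hγ0 hγρ g hgbot hwc (w x) (w x') (Y x) (Y x') (hY' x) (hY' x')
      (R x) (R x') (hR x) (hR x')
  have hμ : (0:ℝ) < 1 - γ*ρ := by linarith
  have hYlip : ∀ x x' : E, ‖Y x - Y x'‖ ≤ ((2/(1-γ*ρ)) * (1 + γ*(Lf+Lh))) * ‖x - x'‖ := by
    intro x x'
    calc ‖Y x - Y x'‖ ≤ (2/(1-γ*ρ)) * ‖w x - w x'‖ := hYlipw x x'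
      _ ≤ (2/(1-γ*ρ)) * ((1 + γ*(Lf+Lh)) * ‖x - x'‖) := by
          apply mul_le_mul_of_nonneg_left (hKw x x') (by positivity)
      _ = _ := by ring
  have hYcont : Continuous Y := by
    apply LipschitzWith.continuous (K := Real.toNNReal ((2/(1-γ*ρ)) * (1 + γ*(Lf+Lh))))
    apply LipschitzWith.of_dist_le_mul
    intro x x'
    rw [dist_eq_norm, dist_eq_norm]
    calc ‖Y x - Y x'‖ ≤ ((2/(1-γ*ρ)) * (1 + γ*(Lf+Lh))) * ‖x - x'‖ := hYlip x x'
      _ ≤ _ := by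
          apply mul_le_mul_of_nonneg_right _ (norm_nonneg _)
          exact Real.le_coe_toNNReal _
  -- smoothness of v
  have hvC1 : ContDiff ℝ 1 v := (gradient_contDiff f hfC2).add (gradient_contDiff h hhC2)
  set H : E → E →L[ℝ] E := fun x => fderiv ℝ v x with hH
  have hvd : ∀ x : E, HasFDerivAt v (H x) x :=
    fun x => (hvC1.differentiable (by norm_num) x).hasFDerivAt
  have hHcont : Continuous H := (contDiff_one_iff_fderiv.mp hvC1).2
  have hveq : v = gradient (fun y => f y + h y) := funext fun x => (hgradsum x).symm
  have hHsymm : ∀ (x u z : E), ⟪H x u, z⟫ = ⟪H x z, u⟫ := by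
    intro x u z
    have : H x = fderiv ℝ (gradient (fun y => f y + h y)) x := by rw [hH, hveq]
    rw [this]
    exact grad_fderiv_symm _ (hfC2.add hhC2) x u z
  have hwd : ∀ x : E, HasFDerivAt w ((ContinuousLinearMap.id ℝ E) - γ • H x) x := by
    intro x
    exact (hasFDerivAt_id x).sub ((hvd x).const_smul γ)
  set G : E → E := fun x => (1/γ) • (x - Y x) - H x (x - Y x) with hG
  have hGcont : Continuous G := by
    apply Continuous.sub
    · exact ((continuous_id.sub hYcont).const_smul _)
    · exact hHcont.clm_apply (continuous_id.sub hYcont)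
  have hKY0 : (0:ℝ) ≤ (2/(1-γ*ρ)) * (1 + γ*(Lf+Lh)) :=
    mul_nonneg (div_nonneg (by norm_num) hμ.le) hKw0
  set Cb : ℝ := 1/(2*γ)*(1 + γ*(Lf+Lh))^2
      + (1/γ)*(((2/(1-γ*ρ)) * (1 + γ*(Lf+Lh)))*(1 + γ*(Lf+Lh))) with hCb
  have hCb0 : (0:ℝ) ≤ Cb := by
    rw [hCb]
    have h1 : (0:ℝ) ≤ 1/(2*γ) := by positivity
    have h2 : (0:ℝ) ≤ 1/γ := by positivity
    have h3 : (0:ℝ) ≤ (1 + γ*(Lf+Lh))^2 := sq_nonneg _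
    nlinarith [mul_nonneg hKY0 hKw0]
  have hΦgrad : ∀ x₀ : E, HasGradientAt Φ (G x₀) x₀ := by
    intro x₀
    set c₀ : E := (1/γ) • (w x₀ - Y x₀) with hc₀
    have key : ∀ x' : E,
        |(R x' + 1/(2*γ)*‖Y x' - w x'‖^2) - (R x₀ + 1/(2*γ)*‖Y x₀ - w x₀‖^2)
          - ⟪c₀, w x' - w x₀⟫|
        ≤ 1/(2*γ)*‖w x' - w x₀‖^2 + (1/γ)*(‖Y x' - Y x₀‖ * ‖w x' - w x₀‖) := by
      intro x'
      have up0' := hY' x' (Y x₀)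
      rw [hR x', hR x₀] at up0'
      have up0 : R x' + 1/(2*γ)*‖Y x' - w x'‖^2 ≤ R x₀ + 1/(2*γ)*‖Y x₀ - w x'‖^2 := by
        exact_mod_cast up0'
      have lo0' := hY' x₀ (Y x')
      rw [hR x₀, hR x'] at lo0'
      have lo0 : R x₀ + 1/(2*γ)*‖Y x₀ - w x₀‖^2 ≤ R x' + 1/(2*γ)*‖Y x' - w x₀‖^2 := by
        exact_mod_cast lo0'
      have eya : Y x₀ - w x' = (Y x₀ - w x₀) - (w x' - w x₀) := by abel
      have eyb : Y x' - w x' = (Y x' - w x₀) - (w x' - w x₀) := by abel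
      rw [eyb, norm_sub_sq_real (Y x' - w x₀) (w x' - w x₀)] at up0 ⊢
      rw [eya, norm_sub_sq_real (Y x₀ - w x₀) (w x' - w x₀)] at up0
      have ecu : ⟪c₀, w x' - w x₀⟫ = -((1/γ)*⟪Y x₀ - w x₀, w x' - w x₀⟫) := by
        rw [hc₀, real_inner_smul_left,
          show w x₀ - Y x₀ = -(Y x₀ - w x₀) from by abel, inner_neg_left]
        ring
      have eI : ⟪Y x' - w x₀, w x' - w x₀⟫ - ⟪Y x₀ - w x₀, w x' - w x₀⟫
          = ⟪Y x' - Y x₀, w x' - w x₀⟫ := by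
        rw [← inner_sub_left]
        congr 1
        abel
      have habs' : |⟪Y x' - w x₀, w x' - w x₀⟫ - ⟪Y x₀ - w x₀, w x' - w x₀⟫|
          ≤ ‖Y x' - Y x₀‖ * ‖w x' - w x₀‖ := by
        rw [eI]
        exact abs_real_inner_le_norm _ _
      exact sandwich_abs γ _ _ _ _ _ _ _ _ _ hγ0 up0 lo0 ecu habs'
        (by positivity) (mul_nonneg (norm_nonneg _) (norm_nonneg _))
    have key2 : ∀ x' : E,
        |(R x' + 1/(2*γ)*‖Y x' - w x'‖^2) - (R x₀ + 1/(2*γ)*‖Y x₀ - w x₀‖^2)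
          - ⟪c₀, w x' - w x₀⟫| ≤ Cb * ‖x' - x₀‖^2 := by
      intro x'
      have hu := hKw x' x₀
      have hy := hYlip x' x₀
      have h1 : ‖w x' - w x₀‖^2 ≤ ((1 + γ*(Lf+Lh))*‖x' - x₀‖)^2 :=
        pow_le_pow_left₀ (norm_nonneg _) hu 2
      have h2 : ‖Y x' - Y x₀‖*‖w x' - w x₀‖
          ≤ (((2/(1-γ*ρ)) * (1 + γ*(Lf+Lh)))*‖x' - x₀‖)*((1 + γ*(Lf+Lh))*‖x' - x₀‖) :=
        mul_le_mul hy hu (norm_nonneg _) (mul_nonneg hKY0 (norm_nonneg _))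
      calc |(R x' + 1/(2*γ)*‖Y x' - w x'‖^2) - (R x₀ + 1/(2*γ)*‖Y x₀ - w x₀‖^2)
          - ⟪c₀, w x' - w x₀⟫|
          ≤ 1/(2*γ)*‖w x' - w x₀‖^2 + (1/γ)*(‖Y x' - Y x₀‖ * ‖w x' - w x₀‖) := key x'
        _ ≤ 1/(2*γ)*(((1 + γ*(Lf+Lh))*‖x' - x₀‖)^2)
            + (1/γ)*((((2/(1-γ*ρ)) * (1 + γ*(Lf+Lh)))*‖x' - x₀‖)*((1 + γ*(Lf+Lh))*‖x' - x₀‖)) := by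
            have t1 := mul_le_mul_of_nonneg_left h1 (show (0:ℝ) ≤ 1/(2*γ) by positivity)
            have t2 := mul_le_mul_of_nonneg_left h2 (show (0:ℝ) ≤ 1/γ by positivity)
            linarith
        _ = Cb * ‖x' - x₀‖^2 := by rw [hCb]; ring
    set Dw : E →L[ℝ] E := (ContinuousLinearMap.id ℝ E) - γ • H x₀ with hDw
    have hwd₀ : HasFDerivAt w Dw x₀ := hwd x₀
    have hlitw : (fun x' => w x' - w x₀ - Dw (x' - x₀)) =o[nhds x₀] fun x' => x' - x₀ :=
      hwd₀.isLittleO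
    have h2 : (fun x' => ⟪c₀, w x' - w x₀ - Dw (x' - x₀)⟫) =o[nhds x₀] fun x' => x' - x₀ := by
      refine Asymptotics.IsBigO.trans_isLittleO ?_ hlitw
      refine Asymptotics.isBigO_iff.mpr ⟨‖c₀‖, Filter.Eventually.of_forall fun x' => ?_⟩
      rw [Real.norm_eq_abs]
      exact abs_real_inner_le_norm _ _
    have h1 : (fun x' => (R x' + 1/(2*γ)*‖Y x' - w x'‖^2)
        - (R x₀ + 1/(2*γ)*‖Y x₀ - w x₀‖^2) - ⟪c₀, w x' - w x₀⟫)
        =o[nhds x₀] fun x' => x' - x₀ := by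
      rw [Asymptotics.isLittleO_iff]
      intro ε hε
      have hC1 : (0:ℝ) < Cb + 1 := by linarith
      have hball : Metric.ball x₀ (ε/(Cb+1)) ∈ nhds x₀ := Metric.ball_mem_nhds _ (by positivity)
      filter_upwards [hball] with x' hx'
      rw [Metric.mem_ball, dist_eq_norm] at hx'
      rw [Real.norm_eq_abs]
      have hD : Cb*(ε/(Cb+1)) ≤ ε := by
        rw [← mul_div_assoc, div_le_iff₀ hC1]
        nlinarith
      calc |(R x' + 1/(2*γ)*‖Y x' - w x'‖^2) - (R x₀ + 1/(2*γ)*‖Y x₀ - w x₀‖^2)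
          - ⟪c₀, w x' - w x₀⟫| ≤ Cb * ‖x' - x₀‖^2 := key2 x'
        _ ≤ ε*‖x' - x₀‖ := by
            have hstep : Cb*‖x' - x₀‖ ≤ ε :=
              le_trans (mul_le_mul_of_nonneg_left hx'.le hCb0) hD
            nlinarith [mul_le_mul_of_nonneg_right hstep (norm_nonneg (x' - x₀))]
    have hLd : HasFDerivAt (fun x => R x + 1/(2*γ)*‖Y x - w x‖^2)
        ((innerSL ℝ c₀).comp Dw) x₀ := by
      refine HasFDerivAt.of_isLittleO ?_
      have heq : (fun x' => (R x' + 1/(2*γ)*‖Y x' - w x'‖^2)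
          - (R x₀ + 1/(2*γ)*‖Y x₀ - w x₀‖^2) - ((innerSL ℝ c₀).comp Dw) (x' - x₀))
          = fun x' => ((R x' + 1/(2*γ)*‖Y x' - w x'‖^2)
            - (R x₀ + 1/(2*γ)*‖Y x₀ - w x₀‖^2) - ⟪c₀, w x' - w x₀⟫)
            + ⟪c₀, w x' - w x₀ - Dw (x' - x₀)⟫ := by
        funext x'
        have hLz : ((innerSL ℝ c₀).comp Dw) (x' - x₀) = ⟪c₀, Dw (x' - x₀)⟫ := rfl
        rw [hLz]
        simp only [inner_sub_right]
        ring
      rw [heq]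
      exact h1.add h2
    have hnv : HasFDerivAt (fun x => ‖v x‖^2) (2 • (innerSL ℝ (v x₀)).comp (H x₀)) x₀ :=
      (hvd x₀).norm_sq
    have hA : HasFDerivAt (fun x => f x + h x - γ/2*‖v x‖^2)
        ((InnerProductSpace.toDual ℝ E) (gradient f x₀) + (InnerProductSpace.toDual ℝ E) (gradient h x₀)
          - (γ/2) • (2 • (innerSL ℝ (v x₀)).comp (H x₀))) x₀ :=
      (((hfd x₀).hasGradientAt.hasFDerivAt).add ((hhd x₀).hasGradientAt.hasFDerivAt)).sub
        (hnv.const_mul (γ/2))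
    have hΦd : HasFDerivAt Φ
        (((InnerProductSpace.toDual ℝ E) (gradient f x₀) + (InnerProductSpace.toDual ℝ E) (gradient h x₀)
          - (γ/2) • (2 • (innerSL ℝ (v x₀)).comp (H x₀))) + (innerSL ℝ c₀).comp Dw) x₀ :=
      hA.add hLd
    rw [hasGradientAt_iff_hasFDerivAt]
    have hEq : (InnerProductSpace.toDual ℝ E) (G x₀)
        = ((InnerProductSpace.toDual ℝ E) (gradient f x₀) + (InnerProductSpace.toDual ℝ E) (gradient h x₀)
          - (γ/2) • (2 • (innerSL ℝ (v x₀)).comp (H x₀))) + (innerSL ℝ c₀).comp Dw := by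
      apply ContinuousLinearMap.ext
      intro z
      simp only [ContinuousLinearMap.add_apply, ContinuousLinearMap.sub_apply,
        ContinuousLinearMap.smul_apply, ContinuousLinearMap.comp_apply,
        ContinuousLinearMap.coe_smul', Pi.smul_apply, innerSL_apply_apply,
        InnerProductSpace.toDual_apply_apply, ContinuousLinearMap.coe_sub',
        ContinuousLinearMap.coe_id', Pi.sub_apply, id_eq, smul_eq_mul, hG, hDw, hc₀]
      have hs1 : ⟪v x₀, H x₀ z⟫ = ⟪H x₀ (v x₀), z⟫ := by
        rw [real_inner_comm]
        exact hHsymm x₀ z (v x₀)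
      have e0 : ⟪(1/γ) • (x₀ - Y x₀) - H x₀ (x₀ - Y x₀), z⟫
          = (1/γ) * ⟪x₀ - Y x₀, z⟫ - ⟪H x₀ (x₀ - Y x₀), z⟫ := by
        rw [inner_sub_left, real_inner_smul_left]
      have e1 : ⟪(1/γ) • (w x₀ - Y x₀), z - γ • H x₀ z⟫
          = (1/γ) * (⟪w x₀ - Y x₀, z⟫ - γ * ⟪H x₀ (w x₀ - Y x₀), z⟫) := by
        rw [real_inner_smul_left, inner_sub_right, real_inner_smul_right]
        have : ⟪w x₀ - Y x₀, H x₀ z⟫ = ⟪H x₀ (w x₀ - Y x₀), z⟫ := by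
          rw [real_inner_comm]
          exact hHsymm x₀ z (w x₀ - Y x₀)
        rw [this]
      rw [e0, e1]
      have ew : w x₀ - Y x₀ = (x₀ - Y x₀) - γ • v x₀ := by
        simp only [hwdef]
        abel
      rw [ew]
      have e2 : ⟪(x₀ - Y x₀) - γ • v x₀, z⟫ = ⟪x₀ - Y x₀, z⟫ - γ * ⟪v x₀, z⟫ := by
        rw [inner_sub_left, real_inner_smul_left]
      have e3 : ⟪H x₀ ((x₀ - Y x₀) - γ • v x₀), z⟫
          = ⟪H x₀ (x₀ - Y x₀), z⟫ - γ * ⟪H x₀ (v x₀), z⟫ := by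
        rw [map_sub, map_smul, inner_sub_left, real_inner_smul_left]
      rw [e2, e3, hs1]
      have e4 : ⟪gradient f x₀ + gradient h x₀, z⟫ = ⟪gradient f x₀, z⟫ + ⟪gradient h x₀, z⟫ :=
        inner_add_left _ _ _
      have e5 : ⟪v x₀, z⟫ = ⟪gradient f x₀, z⟫ + ⟪gradient h x₀, z⟫ := by
        rw [hv]
        exact inner_add_left _ _ _
      rw [e5]
      field_simp
      ring
    rw [hEq]
    exact hΦd
  refine ⟨fun x => ⟨by rw [hrep x]; exact EReal.coe_ne_top _,
    by rw [hrep x]; exact EReal.coe_ne_bot _⟩, ?_, ?_⟩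
  · rw [htoReal]
    refine contDiff_one_iff_fderiv.mpr ⟨fun x => (hΦgrad x).differentiableAt, ?_⟩
    have hfd' : fderiv ℝ Φ = fun x => (InnerProductSpace.toDual ℝ E) (G x) :=
      funext fun x => ((hΦgrad x).hasFDerivAt).fderiv
    rw [hfd']
    exact (InnerProductSpace.toDual ℝ E).continuous.comp hGcont
  · intro x
    rw [htoReal, (hΦgrad x).gradient, hG]
    rw [← hveq]
end
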